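/- arXiv:2102.13458 — 7 statements merged into one kernel-verified Lean document; each statement's English description precedes it below -/
import Mathlib

section
/- If G is a 2K_2-free graph, then χ(G) ≤ ω(G)(ω(G)+1)/2. -/
open SimpleGraph

/-- The disjoint union of `p` edges. -/
def pK2 (p : ℕ) : SimpleGraph (Fin p × Fin 2) where
  Adj a b := a.1 = b.1 ∧ a.2 ≠ b.2
  symm := ⟨fun _ _ ⟨h1, h2⟩ => ⟨h1.symm, h2.symm⟩⟩
  loopless := ⟨fun _ ⟨_, h⟩ => h rfl⟩

/-- `G` is `H`-free: no induced subgraph of `G` is isomorphic to `H`. -/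
def IsFreeOf {V W : Type*} (G : SimpleGraph V) (H : SimpleGraph W) : Prop :=
  IsEmpty (H ↪g G)

/-- A graph on `Fin n` with edges given by a list of pairs. -/
def graphOfList (n : ℕ) (l : List (ℕ × ℕ)) : SimpleGraph (Fin n) :=
  SimpleGraph.fromRel (fun a b => ((a : ℕ), (b : ℕ)) ∈ l)

private noncomputable def twoK2_emb {V : Type*} {G : SimpleGraph V} {x y u v : V}
    (hxy : G.Adj x y) (huv : G.Adj u v)
    (hxu : ¬G.Adj x u) (hxv : ¬G.Adj x v) (hyu : ¬G.Adj y u) (hyv : ¬G.Adj y v) :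
    pK2 2 ↪g G := by
  have hxy' : x ≠ y := G.ne_of_adj hxy
  have huv' : u ≠ v := G.ne_of_adj huv
  have hx1 : x ≠ u := fun hh => hxv (hh.symm ▸ huv)
  have hx2 : x ≠ v := fun hh => hxu (hh.symm ▸ huv.symm)
  have hy1 : y ≠ u := fun hh => hyv (hh.symm ▸ huv)
  have hy2 : y ≠ v := fun hh => hyu (hh.symm ▸ huv.symm)
  have hxu' : ¬G.Adj u x := fun hh => hxu (G.adj_symm hh)
  have hxv' : ¬G.Adj v x := fun hh => hxv (G.adj_symm hh)
  have hyu' : ¬G.Adj u y := fun hh => hyu (G.adj_symm hh)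
  have hyv' : ¬G.Adj v y := fun hh => hyv (G.adj_symm hh)
  refine ⟨⟨fun p => ![![x, y], ![u, v]] p.1 p.2, ?_⟩, ?_⟩
  · intro p q hpq
    fin_cases p <;> fin_cases q <;> simp_all
  · intro p q
    fin_cases p <;> fin_cases q <;>
      simp [pK2, hxy, hxy.symm, huv, huv.symm, hxu, hxv, hyu, hyv,
        hxu', hxv', hyu', hyv']

theorem chromatic_le_of_2K2_free {V : Type*} [Fintype V] (G : SimpleGraph V)
    (h : IsFreeOf G (pK2 2)) :
    G.chromaticNumber ≤ ((G.cliqueNum * (G.cliqueNum + 1) / 2 : ℕ) : ℕ∞) := by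
  classical
  have h' : IsEmpty (pK2 2 ↪g G) := h
  obtain ⟨s, hs⟩ := G.exists_isNClique_cliqueNum
  set n := G.cliqueNum with hn
  -- enumerate the maximum clique
  let eqv : {x // x ∈ s} ≃ Fin n := Fintype.equivFinOfCardEq (by simp [hs.card_eq])
  let f : Fin n → V := fun i => (eqv.symm i : V)
  have hfs : ∀ i, f i ∈ s := fun i => (eqv.symm i).2
  have hfinj : Function.Injective f := fun i j hij =>
    eqv.symm.injective (Subtype.ext hij)
  have hsurj : ∀ x ∈ s, ∃ i, f i = x := by
    intro x hx
    exact ⟨eqv ⟨x, hx⟩, by simp [f]⟩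
  have hadj : ∀ i j, i ≠ j → G.Adj (f i) (f j) := by
    intro i j hij
    exact hs.isClique (hfs i) (hfs j) (fun hh => hij (hfinj hh))
  -- every vertex has a non-neighbor in the clique
  have key : ∀ x : V, ∃ i, ¬ G.Adj x (f i) := by
    intro x
    by_contra hc
    push_neg at hc
    have hadjall : ∀ b ∈ s, G.Adj x b := by
      intro b hb
      obtain ⟨i, rfl⟩ := hsurj b hb
      exact hc i
    have hcl : G.IsNClique (n + 1) (insert x s) := hs.insert hadjall
    have := hcl.isClique.card_le_cliqueNum
    rw [hcl.card_eq] at this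
    omega
  -- the two smallest non-neighbor indices
  let T : V → Finset (Fin n) := fun x => Finset.univ.filter (fun i => ¬ G.Adj x (f i))
  have hT : ∀ x i, i ∈ T x ↔ ¬ G.Adj x (f i) := by intro x i; simp [T]
  have hTne : ∀ x, (T x).Nonempty := by
    intro x
    obtain ⟨i, hi⟩ := key x
    exact ⟨i, (hT x i).mpr hi⟩
  let a : V → Fin n := fun x => (T x).min' (hTne x)
  let b : V → Fin n := fun x =>
    if hx : ((T x).erase (a x)).Nonempty then ((T x).erase (a x)).min' hx else a x
  have haT : ∀ x, a x ∈ T x := fun x => (T x).min'_mem _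
  have hbT : ∀ x, b x ∈ T x := by
    intro x
    by_cases hx : ((T x).erase (a x)).Nonempty
    · simp only [b, dif_pos hx]
      exact Finset.mem_of_mem_erase (Finset.min'_mem _ _)
    · simp only [b, dif_neg hx]
      exact haT x
  have hab : ∀ x, a x ≤ b x := fun x => Finset.min'_le _ _ (hbT x)
  have hsingle : ∀ x, b x = a x → ∀ i ∈ T x, i = a x := by
    intro x hbx i hi
    by_contra hne
    have hne' : ((T x).erase (a x)).Nonempty := ⟨i, Finset.mem_erase.mpr ⟨hne, hi⟩⟩
    have hmem : b x ∈ (T x).erase (a x) := by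
      simp only [b, dif_pos hne']
      exact Finset.min'_mem _ _
    exact (Finset.mem_erase.mp hmem).1 hbx
  -- validity of the coloring
  have valid : ∀ {x y : V}, G.Adj x y → s(a x, b x) ≠ s(a y, b y) := by
    intro x y hxy heq
    have hkey : a x = a y ∧ b x = b y := by
      rcases Sym2.eq_iff.mp heq with hk | ⟨h1, h2⟩
      · exact hk
      · have haa : a x = a y := le_antisymm (h2 ▸ hab x) (h1 ▸ hab y)
        exact ⟨haa, h2.trans (haa.symm.trans h1)⟩
    obtain ⟨ha1, hb1⟩ := hkey
    have hnx1 : ¬ G.Adj x (f (a x)) := (hT x _).mp (haT x)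
    have hnx2 : ¬ G.Adj x (f (b x)) := (hT x _).mp (hbT x)
    have hny1 : ¬ G.Adj y (f (a x)) := ha1 ▸ (hT y _).mp (haT y)
    have hny2 : ¬ G.Adj y (f (b x)) := hb1 ▸ (hT y _).mp (hbT y)
    by_cases hcase : b x = a x
    · -- all clique vertices other than f (a x) are adjacent to both x and y
      have hcy : b y = a y := by rw [← hb1, ← ha1]; exact hcase
      have hax : ∀ z ∈ s.erase (f (a x)), G.Adj x z := by
        intro z hz
        obtain ⟨hz1, hz2⟩ := Finset.mem_erase.mp hz
        obtain ⟨k, rfl⟩ := hsurj z hz2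
        by_contra hcz
        exact hz1 (congrArg f (hsingle x hcase k ((hT x k).mpr hcz)))
      have hay : ∀ z ∈ s.erase (f (a x)), G.Adj y z := by
        intro z hz
        obtain ⟨hz1, hz2⟩ := Finset.mem_erase.mp hz
        obtain ⟨k, rfl⟩ := hsurj z hz2
        by_contra hcz
        exact hz1 (congrArg f ((hsingle y hcy k ((hT y k).mpr hcz)).trans ha1.symm))
      have herase : G.IsNClique (n - 1) (s.erase (f (a x))) := by
        constructor
        · exact hs.isClique.subset (by simp)
        · rw [Finset.card_erase_of_mem (hfs (a x)), hs.card_eq]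
      have hc1 : G.IsNClique (n - 1 + 1) (insert y (s.erase (f (a x)))) :=
        herase.insert hay
      have hc2 : G.IsNClique (n - 1 + 1 + 1) (insert x (insert y (s.erase (f (a x))))) := by
        refine hc1.insert ?_
        intro z hz
        rcases Finset.mem_insert.mp hz with rfl | hz'
        · exact hxy
        · exact hax z hz'
      have hle := hc2.isClique.card_le_cliqueNum
      rw [hc2.card_eq] at hle
      have hn1 : 1 ≤ n := by
        have := Finset.card_pos.mpr ⟨f (a x), hfs (a x)⟩
        omega
      omega
    · -- induced 2K₂
      have hadjab : G.Adj (f (a x)) (f (b x)) := hadj _ _ (fun hh => hcase hh.symm)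
      exact h'.false (twoK2_emb hxy hadjab hnx1 hnx2 hny1 hny2)
  let C : G.Coloring (Sym2 (Fin n)) := Coloring.mk (fun x => s(a x, b x)) valid
  have hle := C.colorable.chromaticNumber_le
  have hcard : Fintype.card (Sym2 (Fin n)) = n * (n + 1) / 2 := by
    rw [Sym2.card, Fintype.card_fin, Nat.choose_two_right, Nat.succ_sub_one, Nat.mul_comm]
  rw [hcard] at hle
  exact hle
end

section
/- If G is a {2K_2, gem}-free graph, then χ(G) ≤ max{3, ω(G)}. -/
open SimpleGraph

/-- The gem: `K_1 + P_4`. -/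
def gemGraph : SimpleGraph (Fin 5) :=
  graphOfList 5 [(0,1),(1,2),(2,3),(0,4),(1,4),(2,4),(3,4)]

lemma no2K2' {V : Type*} {G : SimpleGraph V} (h1 : IsFreeOf G (pK2 2))
    {a b c d : V} (hab : G.Adj a b) (hcd : G.Adj c d)
    (hac : ¬G.Adj a c) (had : ¬G.Adj a d) (hbc : ¬G.Adj b c) (hbd : ¬G.Adj b d)
    (nac : a ≠ c) (nad : a ≠ d) (nbc : b ≠ c) (nbd : b ≠ d) : False := by
  have nab : a ≠ b := hab.ne
  have ncd : c ≠ d := hcd.ne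
  have hca : ¬G.Adj c a := fun h => hac h.symm
  have hda : ¬G.Adj d a := fun h => had h.symm
  have hcb : ¬G.Adj c b := fun h => hbc h.symm
  have hdb : ¬G.Adj d b := fun h => hbd h.symm
  apply h1.false
  refine ⟨⟨fun p => ![![a,b],![c,d]] p.1 p.2, ?_⟩, ?_⟩
  · rintro ⟨i, x⟩ ⟨j, y⟩ h
    fin_cases i <;> fin_cases x <;> fin_cases j <;> fin_cases y <;>
      simp_all <;> simp_all [eq_comm]
  · rintro ⟨i, x⟩ ⟨j, y⟩
    fin_cases i <;> fin_cases x <;> fin_cases j <;> fin_cases y <;>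
      simp [pK2, hab, hcd, hac, had, hbc, hbd, hab.symm, hcd.symm, hca, hda, hcb, hdb]

lemma noGem' {V : Type*} {G : SimpleGraph V} (h2 : IsFreeOf G gemGraph)
    {a b c d e : V}
    (hab : G.Adj a b) (hbc : G.Adj b c) (hcd : G.Adj c d)
    (hac : ¬G.Adj a c) (had : ¬G.Adj a d) (hbd : ¬G.Adj b d)
    (hea : G.Adj e a) (heb : G.Adj e b) (hec : G.Adj e c) (hed : G.Adj e d)
    (nac : a ≠ c) (nad : a ≠ d) (nbd : b ≠ d) : False := by
  have nab : a ≠ b := hab.ne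
  have nbc : b ≠ c := hbc.ne
  have ncd : c ≠ d := hcd.ne
  have nea : e ≠ a := hea.ne
  have neb : e ≠ b := heb.ne
  have nec : e ≠ c := hec.ne
  have ned : e ≠ d := hed.ne
  have hca : ¬G.Adj c a := fun h => hac h.symm
  have hda : ¬G.Adj d a := fun h => had h.symm
  have hdb : ¬G.Adj d b := fun h => hbd h.symm
  apply h2.false
  refine ⟨⟨![a,b,c,d,e], ?_⟩, ?_⟩
  · intro i j h
    fin_cases i <;> fin_cases j <;> simp_all <;> simp_all [eq_comm]
  · intro i j
    change G.Adj (![a,b,c,d,e] i) (![a,b,c,d,e] j) ↔ gemGraph.Adj i j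
    fin_cases i <;> fin_cases j <;>
      simp [gemGraph, graphOfList, SimpleGraph.fromRel_adj, Function.Embedding.coeFn_mk, hab, hbc, hcd, hac, had, hbd,
        hea, heb, hec, hed, hab.symm, hbc.symm, hcd.symm, hea.symm, heb.symm, hec.symm, hed.symm,
        hca, hda, hdb] <;> decide

open Fin.NatCast in
lemma cyc_succ {n : ℕ} [NeZero n] (T : Finset (Fin n)) (hne : T.Nonempty)
    (hproper : T ≠ Finset.univ) : ∃ x, x ∉ T ∧ x + 1 ∈ T := by
  by_contra h
  push_neg at h
  obtain ⟨b, hb⟩ : ∃ b, b ∉ T := by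
    by_contra hall
    push_neg at hall
    exact hproper (Finset.eq_univ_of_forall hall)
  have key : ∀ m : ℕ, b + (m : Fin n) ∉ T := by
    intro m
    induction m with
    | zero => simpa using hb
    | succ k ih =>
      have hc : ((k + 1 : ℕ) : Fin n) = ((k : ℕ) : Fin n) + 1 := by push_cast; ring
      rw [hc, ← add_assoc]
      exact h _ ih
  obtain ⟨a, ha⟩ := hne
  have hrepr : b + (((a - b : Fin n).val : ℕ) : Fin n) = a := by
    rw [Fin.cast_val_eq_self]; exact add_sub_cancel b a
  exact key _ (hrepr ▸ ha)


lemma cliquenum_ge3 {V : Type*} [Fintype V] [DecidableEq V] {G : SimpleGraph V} {x a b : V} (h1 : G.Adj x a) (h2 : G.Adj x b) (h3 : G.Adj a b) :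
    3 ≤ G.cliqueNum := by
  have hc : G.IsNClique 3 {x, a, b} := is3Clique_triple_iff.2 ⟨h1, h2, h3⟩
  have h4 := hc.isClique.card_le_cliqueNum
  rwa [hc.card_eq] at h4

lemma small_omega {V : Type*} [Fintype V] {G : SimpleGraph V}
    (h1 : IsFreeOf G (pK2 2)) (hw : G.cliqueNum ≤ 2) : G.Colorable 3 := by
  classical
  by_cases hE : ∃ x y, G.Adj x y
  · obtain ⟨x, y, hxy⟩ := hE
    refine ⟨Coloring.mk (fun v => if G.Adj x v then 0 else if G.Adj y v then 1 else 2) ?_⟩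
    intro a b hab heq
    by_cases hxa : G.Adj x a <;> by_cases hxb : G.Adj x b <;>
      by_cases hya : G.Adj y a <;> by_cases hyb : G.Adj y b <;>
      simp only [hxa, hxb, hya, hyb, if_true, if_false] at heq
    all_goals first
      | (exact absurd heq (by decide))
      | (exact absurd (cliquenum_ge3 hxa hxb hab) (by omega))
      | (exact absurd (cliquenum_ge3 hya hyb hab) (by omega))
      | skip
    -- remaining case: all four non-adjacencies
    · have nax : a ≠ x := fun h => hxb (h ▸ hab)
      have nay : a ≠ y := fun h => hyb (h ▸ hab)
      have nbx : b ≠ x := fun h => hxa (h ▸ hab.symm)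
      have nby : b ≠ y := fun h => hya (h ▸ hab.symm)
      exact no2K2' h1 hab hxy (fun h => hxa h.symm) (fun h => hya h.symm)
        (fun h => hxb h.symm) (fun h => hyb h.symm) nax nay nbx nby
  · push_neg at hE
    exact ⟨Coloring.mk (fun _ => 0) (fun {a b} hab => absurd hab (hE a b))⟩

lemma big_omega {V : Type*} [Fintype V] {G : SimpleGraph V}
    (h1 : IsFreeOf G (pK2 2)) (h2 : IsFreeOf G gemGraph) (hw : 3 ≤ G.cliqueNum) :
    G.Colorable G.cliqueNum := by
  classical
  obtain ⟨s, hs⟩ := G.exists_isNClique_cliqueNum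
  set n := G.cliqueNum with hn
  have hcard : s.card = n := hs.card_eq
  have hK : ∀ {x y : V}, x ∈ s → y ∈ s → x ≠ y → G.Adj x y :=
    fun hx hy hne => hs.isClique hx hy hne
  haveI : NeZero n := ⟨by omega⟩
  have hcardS : Fintype.card {x // x ∈ s} = n := by rw [Fintype.card_coe]; exact hcard
  let e : {x // x ∈ s} ≃ Fin n := Fintype.equivFinOfCardEq hcardS
  let succ : {x // x ∈ s} → {x // x ∈ s} := fun k => e.symm (e k + 1)
  have hsucc_ne : ∀ k : {x // x ∈ s}, (↑(succ k) : V) ≠ ↑k := by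
    intro k h
    have h2' : succ k = k := Subtype.coe_injective h
    have h3 : e k + 1 = e k := by
      have := congrArg e h2'
      simpa [succ] using this
    have h4 : (1 : Fin n) = 0 := by
      have : e k + 1 = e k + 0 := by rw [add_zero]; exact h3
      exact add_left_cancel this
    have h5 := congrArg Fin.val h4
    rw [Fin.val_one', Fin.val_zero] at h5
    rw [Nat.mod_eq_of_lt (by omega)] at h5
    omega
  -- the "full neighborhood in s" predicate
  have hclique_bound : ∀ t : Finset V, G.IsClique ↑t → t.card ≤ n := by
    intro t ht
    exact ht.card_le_cliqueNum
  have spec1 : ∀ v, v ∉ s → (∃ k : {x // x ∈ s}, G.Adj v ↑k) →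
      ∃ k : {x // x ∈ s}, ¬G.Adj v ↑k ∧ G.Adj v ↑(succ k) := by
    intro v hv hA
    obtain ⟨k0, hk0⟩ := hA
    set T : Finset (Fin n) := Finset.univ.filter (fun x => G.Adj v ↑(e.symm x)) with hT
    have hTne : T.Nonempty := ⟨e k0, by simp [hT, hk0]⟩
    have hTproper : T ≠ Finset.univ := by
      intro hTu
      have hall : ∀ j ∈ s, G.Adj v j := by
        intro j hj
        have hmem : e ⟨j, hj⟩ ∈ T := hTu ▸ Finset.mem_univ _
        simpa [hT] using hmem
      have hcl : G.IsClique ↑(insert v s) := by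
        rw [Finset.coe_insert, isClique_insert]
        exact ⟨hs.isClique, fun b hb _ => hall b hb⟩
      have := hclique_bound _ hcl
      rw [Finset.card_insert_of_notMem hv, hcard] at this
      omega
    obtain ⟨x, hx1, hx2⟩ := cyc_succ T hTne hTproper
    refine ⟨e.symm x, ?_, ?_⟩
    · intro hadj; exact hx1 (by simp [hT, hadj])
    · have hse : succ (e.symm x) = e.symm (x + 1) := by simp [succ]
      rw [hse]
      simp only [hT, Finset.mem_filter] at hx2
      exact hx2.2
  have spec0 : ∀ v, v ∉ s → ¬(∃ k : {x // x ∈ s}, G.Adj v ↑k) →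
      ∃ k : {x // x ∈ s}, ¬∃ w, G.Adj v w ∧ ∀ j ∈ s, (G.Adj w j ↔ j ≠ ↑k) := by
    intro v hv hA
    by_contra hc
    push_neg at hc
    choose w hw1 hw2 using hc
    have hvnadj : ∀ j ∈ s, ¬ G.Adj v j := fun j hj hadj => hA ⟨⟨j, hj⟩, hadj⟩
    have hwns : ∀ k, w k ∉ s := fun k hk => hvnadj _ hk (hw1 k)
    have hwk_not : ∀ k : {x // x ∈ s}, ¬ G.Adj (w k) ↑k :=
      fun k h => ((hw2 k ↑k k.2).1 h) rfl
    have hwk_adj : ∀ (k : {x // x ∈ s}) (j) (hj : j ∈ s), j ≠ ↑k → G.Adj (w k) j :=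
      fun k j hj hne => (hw2 k j hj).2 hne
    have hpair : ∀ k l : {x // x ∈ s}, k ≠ l → G.Adj (w k) (w l) := by
      intro k l hkl
      by_contra hnadj
      have hcoene : (↑k : V) ≠ ↑l := fun h => hkl (Subtype.coe_injective h)
      obtain ⟨t, ht, htl, htk⟩ : ∃ t ∈ s, t ≠ (↑l : V) ∧ t ≠ (↑k : V) := by
        have hlmem : (↑l : V) ∈ s.erase ↑k := Finset.mem_erase.mpr ⟨Ne.symm hcoene, l.2⟩
        have hcard2 : ((s.erase (↑k : V)).erase ↑l).card = n - 2 := by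
          rw [Finset.card_erase_of_mem hlmem, Finset.card_erase_of_mem k.2, hcard]
          omega
        have : ((s.erase (↑k : V)).erase ↑l).Nonempty := by
          apply Finset.card_pos.mp; omega
        obtain ⟨t, ht'⟩ := this
        rw [Finset.mem_erase, Finset.mem_erase] at ht'
        exact ⟨t, ht'.2.2, ht'.1, ht'.2.1⟩
      refine noGem' h2 (a := w k) (b := (↑l : V)) (c := (↑k : V)) (d := w l) (e := t)
        (hwk_adj k ↑l l.2 (Ne.symm hcoene)) (hK l.2 k.2 (Ne.symm hcoene))
        ((hwk_adj l ↑k k.2 hcoene).symm)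
        (hwk_not k) hnadj (fun h => hwk_not l h.symm)
        ((hwk_adj k t ht htk).symm) (hK ht l.2 htl) (hK ht k.2 htk)
        ((hwk_adj l t ht htl).symm)
        (fun h => hwns k (by rw [h]; exact k.2))
        (fun h => hwk_not k (by rw [h]; exact hwk_adj l ↑k k.2 hcoene))
        (fun h => hwns l (by rw [← h]; exact l.2))
    have hwinj : Function.Injective w := by
      intro k l h
      by_contra hkl
      exact G.loopless.irrefl _ (h ▸ hpair k l hkl)
    have hclique : G.IsClique ↑(insert v (Finset.image w Finset.univ)) := by
      rw [Finset.coe_insert, isClique_insert]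
      constructor
      · intro p hp q hq hpq
        simp only [Finset.coe_image, Finset.coe_univ, Set.image_univ, Set.mem_range] at hp hq
        obtain ⟨k, rfl⟩ := hp
        obtain ⟨l, rfl⟩ := hq
        exact hpair k l (fun h => hpq (by rw [h]))
      · intro b hb _
        simp only [Finset.mem_coe, Finset.mem_image, Finset.mem_univ, true_and] at hb
        obtain ⟨k, rfl⟩ := hb
        exact hw1 k
    have hcardt : (insert v (Finset.image w Finset.univ)).card = n + 1 := by
      rw [Finset.card_insert_of_notMem, Finset.card_image_of_injective _ hwinj,
        Finset.card_univ, hcardS]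
      intro hv'
      simp only [Finset.mem_image, Finset.mem_univ, true_and] at hv'
      obtain ⟨k, hk⟩ := hv'
      exact G.loopless.irrefl v (hk ▸ hw1 k)
    have := hclique_bound _ hclique
    rw [hcardt] at this
    omega
  -- the coloring
  let c : V → {x // x ∈ s} := fun v =>
    if hv : v ∈ s then ⟨v, hv⟩
    else if hA : ∃ k : {x // x ∈ s}, G.Adj v ↑k then Classical.choose (spec1 v hv hA)
    else Classical.choose (spec0 v hv hA)
  have hcdef : ∀ v, c v = if hv : v ∈ s then ⟨v, hv⟩
    else if hA : ∃ k : {x // x ∈ s}, G.Adj v ↑k then Classical.choose (spec1 v hv hA)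
    else Classical.choose (spec0 v hv hA) := fun v => rfl
  have hc_mem : ∀ v (hv : v ∈ s), c v = ⟨v, hv⟩ := by
    intro v hv; rw [hcdef, dif_pos hv]
  have hc_nadj : ∀ v, ¬ G.Adj v ↑(c v) := by
    intro v
    by_cases hv : v ∈ s
    · rw [hc_mem v hv]; exact G.loopless.irrefl v
    · by_cases hA : ∃ k : {x // x ∈ s}, G.Adj v ↑k
      · rw [hcdef, dif_neg hv, dif_pos hA]
        exact (Classical.choose_spec (spec1 v hv hA)).1
      · intro h; exact hA ⟨_, h⟩
  have hc_succ : ∀ v, v ∉ s → (∃ k : {x // x ∈ s}, G.Adj v ↑k) → G.Adj v ↑(succ (c v)) := by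
    intro v hv hA
    rw [hcdef, dif_neg hv, dif_pos hA]
    exact (Classical.choose_spec (spec1 v hv hA)).2
  have hc_D0 : ∀ v, v ∉ s → ¬(∃ k : {x // x ∈ s}, G.Adj v ↑k) →
      ¬∃ w, G.Adj v w ∧ ∀ j ∈ s, (G.Adj w j ↔ j ≠ ↑(c v)) := by
    intro v hv hA
    rw [hcdef, dif_neg hv, dif_neg hA]
    exact Classical.choose_spec (spec0 v hv hA)
  have valid : ∀ {a b : V}, G.Adj a b → c a ≠ c b := by
    intro a b hab heq
    by_cases ha : a ∈ s <;> by_cases hb : b ∈ s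
    · rw [hc_mem a ha, hc_mem b hb] at heq
      exact hab.ne (congrArg Subtype.val heq)
    · apply hc_nadj b
      rw [← heq, hc_mem a ha]
      exact hab.symm
    · apply hc_nadj a
      rw [heq, hc_mem b hb]
      exact hab
    · -- both outside s
      have hai : ¬ G.Adj a ↑(c a) := hc_nadj a
      have hbi : ¬ G.Adj b ↑(c a) := by rw [heq]; exact hc_nadj b
      have his : (↑(c a) : V) ∈ s := (c a).2
      by_cases hAa : ∃ k : {x // x ∈ s}, G.Adj a ↑k
        <;> by_cases hAb : ∃ k : {x // x ∈ s}, G.Adj b ↑k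
      · -- both D1
        have hat : G.Adj a ↑(succ (c a)) := hc_succ a ha hAa
        have hbt : G.Adj b ↑(succ (c a)) := by rw [heq]; exact hc_succ b hb hAb
        have hts : (↑(succ (c a)) : V) ∈ s := (succ (c a)).2
        have hti : (↑(succ (c a)) : V) ≠ ↑(c a) := hsucc_ne (c a)
        by_cases hex : ∃ x ∈ s, G.Adj b x ∧ ¬ G.Adj a x
        · obtain ⟨x, hxs, hbx, hax⟩ := hex
          have hxi : x ≠ ↑(c a) := fun h => hbi (h ▸ hbx)
          have hxt : x ≠ ↑(succ (c a)) := fun h => hax (h ▸ hat)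
          exact noGem' h2 hab hbx (hK hxs his hxi) hax hai hbi
            hat.symm hbt.symm (hK hts hxs (Ne.symm hxt)) (hK hts his hti)
            (fun h => ha (h ▸ hxs)) (fun h => ha (h ▸ his)) (fun h => hb (h ▸ his))
        · by_cases hex2 : ∃ x ∈ s, G.Adj a x ∧ ¬ G.Adj b x
          · obtain ⟨x, hxs, hax, hbx⟩ := hex2
            have hxi : x ≠ ↑(c a) := fun h => hai (h ▸ hax)
            have hxt : x ≠ ↑(succ (c a)) := fun h => hbx (h ▸ hbt)
            exact noGem' h2 hab.symm hax (hK hxs his hxi) hbx hbi hai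
              hbt.symm hat.symm (hK hts hxs (Ne.symm hxt)) (hK hts his hti)
              (fun h => hb (h ▸ hxs)) (fun h => hb (h ▸ his)) (fun h => ha (h ▸ his))
          · push_neg at hex hex2
            by_cases hj : ∃ j ∈ s, j ≠ (↑(c a) : V) ∧ ¬ G.Adj a j
            · obtain ⟨j, hjs, hji, haj⟩ := hj
              have hbj : ¬ G.Adj b j := fun h => haj (hex j hjs h)
              exact no2K2' h1 hab (hK his hjs (Ne.symm hji)) hai haj hbi hbj
                (fun h => ha (h ▸ his)) (fun h => ha (h ▸ hjs))
                (fun h => hb (h ▸ his)) (fun h => hb (h ▸ hjs))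
            · push_neg at hj
              have hcl : G.IsClique ↑(insert a (insert b (s.erase ↑(c a)))) := by
                rw [Finset.coe_insert, isClique_insert, Finset.coe_insert, isClique_insert]
                refine ⟨⟨?_, ?_⟩, ?_⟩
                · apply hs.isClique.subset
                  rw [Finset.coe_erase]
                  exact Set.diff_subset
                · intro x hx _
                  rw [Finset.mem_coe, Finset.mem_erase] at hx
                  exact hex2 x hx.2 (hj x hx.2 hx.1)
                · intro x hx hax'
                  rw [Set.mem_insert_iff] at hx
                  rcases hx with rfl | hx
                  · exact hab
                  · rw [Finset.mem_coe, Finset.mem_erase] at hx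
                    exact hj x hx.2 hx.1
              have hcard2 : (insert a (insert b (s.erase ↑(c a)))).card = n + 1 := by
                rw [Finset.card_insert_of_notMem, Finset.card_insert_of_notMem,
                  Finset.card_erase_of_mem his, hcard]
                · omega
                · intro h; exact hb (Finset.mem_of_mem_erase h)
                · intro h
                  rw [Finset.mem_insert] at h
                  rcases h with rfl | h
                  · exact hab.ne rfl
                  · exact ha (Finset.mem_of_mem_erase h)
              have := hclique_bound _ hcl
              rw [hcard2] at this
              omega
      · -- a D1, b D0
        apply hc_D0 b hb hAb
        refine ⟨a, hab.symm, ?_⟩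
        intro j hjs
        constructor
        · intro haj heq2
          apply hai
          rw [← heq] at heq2
          rw [← heq2]
          exact haj
        · intro hji
          by_contra haj
          have hji' : j ≠ (↑(c a) : V) := by rw [heq]; exact hji
          have hbnadj : ∀ x ∈ s, ¬ G.Adj b x := fun x hx h => hAb ⟨⟨x, hx⟩, h⟩
          exact no2K2' h1 hab.symm (hK his hjs (Ne.symm hji')) (hbnadj _ his) (hbnadj j hjs)
            hai haj
            (fun h => hb (h ▸ his)) (fun h => hb (h ▸ hjs))
            (fun h => ha (h ▸ his)) (fun h => ha (h ▸ hjs))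
      · -- a D0, b D1
        apply hc_D0 a ha hAa
        refine ⟨b, hab, ?_⟩
        intro j hjs
        constructor
        · intro hbj heq2
          apply hbi
          rw [← heq2]
          exact hbj
        · intro hji
          by_contra hbj
          have hanadj : ∀ x ∈ s, ¬ G.Adj a x := fun x hx h => hAa ⟨⟨x, hx⟩, h⟩
          exact no2K2' h1 hab (hK his hjs (Ne.symm hji)) (hanadj _ his) (hanadj j hjs)
            hbi hbj
            (fun h => ha (h ▸ his)) (fun h => ha (h ▸ hjs))
            (fun h => hb (h ▸ his)) (fun h => hb (h ▸ hjs))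
      · -- both D0
        have hanadj : ∀ x ∈ s, ¬ G.Adj a x := fun x hx h => hAa ⟨⟨x, hx⟩, h⟩
        have hbnadj : ∀ x ∈ s, ¬ G.Adj b x := fun x hx h => hAb ⟨⟨x, hx⟩, h⟩
        obtain ⟨p, hp, q, hq, hpq⟩ : ∃ p ∈ s, ∃ q ∈ s, p ≠ q := by
          apply Finset.one_lt_card.mp
          omega
        exact no2K2' h1 hab (hK hp hq hpq) (hanadj p hp) (hanadj q hq)
          (hbnadj p hp) (hbnadj q hq)
          (fun h => ha (h ▸ hp)) (fun h => ha (h ▸ hq))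
          (fun h => hb (h ▸ hp)) (fun h => hb (h ▸ hq))
  have hcol := (Coloring.mk c valid).colorable
  rwa [hcardS] at hcol


theorem chromatic_le_of_2K2_gem_free {V : Type*} [Fintype V] (G : SimpleGraph V)
    (h1 : IsFreeOf G (pK2 2)) (h2 : IsFreeOf G gemGraph) :
    G.chromaticNumber ≤ ((max 3 G.cliqueNum : ℕ) : ℕ∞) := by
  classical
  rcases le_or_gt G.cliqueNum 2 with hw | hw
  · have h3 := (small_omega h1 hw).chromaticNumber_le
    refine le_trans h3 ?_
    exact_mod_cast le_max_left 3 G.cliqueNum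
  · have h3 := (big_omega h1 h2 (by omega)).chromaticNumber_le
    refine le_trans h3 ?_
    exact_mod_cast le_max_right 3 G.cliqueNum
end

section
/- If G is a {2K_2, HVN}-free graph with ω(G) ≥ 4, then χ(G) = ω(G). -/
open SimpleGraph

/-- HVN: `K_4` plus a vertex adjacent to exactly two of its vertices. -/
def HVN : SimpleGraph (Fin 5) :=
  graphOfList 5 [(0,1),(0,2),(0,3),(1,2),(1,3),(2,3),(0,4),(1,4)]

/-! ### Auxiliary lemmas -/

lemma no2K2 {V : Type*} {G : SimpleGraph V} (h1 : IsFreeOf G (pK2 2))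
    {v w x y : V} (hvw : G.Adj v w) (hxy : G.Adj x y)
    (hvx : ¬G.Adj v x) (hvy : ¬G.Adj v y) (hwx : ¬G.Adj w x) (hwy : ¬G.Adj w y) : False := by
  have hxv : ¬G.Adj x v := fun h => hvx h.symm
  have hyv : ¬G.Adj y v := fun h => hvy h.symm
  have hxw : ¬G.Adj x w := fun h => hwx h.symm
  have hyw : ¬G.Adj y w := fun h => hwy h.symm
  have n1 : v ≠ w := hvw.ne
  have n2 : x ≠ y := hxy.ne
  have n3 : v ≠ x := by rintro rfl; exact hvy hxy
  have n4 : v ≠ y := by rintro rfl; exact hvx hxy.symm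
  have n5 : w ≠ x := by rintro rfl; exact hwy hxy
  have n6 : w ≠ y := by rintro rfl; exact hwx hxy.symm
  refine h1.elim ⟨⟨fun p => ![![v,w],![x,y]] p.1 p.2, ?_⟩, ?_⟩
  · rintro ⟨a1,a2⟩ ⟨b1,b2⟩ h
    fin_cases a1 <;> fin_cases a2 <;> fin_cases b1 <;> fin_cases b2 <;>
      first | rfl | simp_all
  · rintro ⟨a1,a2⟩ ⟨b1,b2⟩
    fin_cases a1 <;> fin_cases a2 <;> fin_cases b1 <;> fin_cases b2 <;>
      simp_all [pK2, hvw.symm, hxy.symm]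

lemma noHVN {V : Type*} {G : SimpleGraph V} (h2 : IsFreeOf G HVN)
    {a b c d e : V} (hab : G.Adj a b) (hac : G.Adj a c) (had : G.Adj a d)
    (hbc : G.Adj b c) (hbd : G.Adj b d) (hcd : G.Adj c d)
    (hae : G.Adj a e) (hbe : G.Adj b e) (hce : ¬G.Adj c e) (hde : ¬G.Adj d e) : False := by
  have hec : ¬G.Adj e c := fun h => hce h.symm
  have hed : ¬G.Adj e d := fun h => hde h.symm
  have n1 : a ≠ b := hab.ne
  have n2 : a ≠ c := hac.ne
  have n3 : a ≠ d := had.ne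
  have n4 : b ≠ c := hbc.ne
  have n5 : b ≠ d := hbd.ne
  have n6 : c ≠ d := hcd.ne
  have n7 : a ≠ e := hae.ne
  have n8 : b ≠ e := hbe.ne
  have n9 : c ≠ e := by rintro rfl; exact hde hcd.symm
  have n10 : d ≠ e := by rintro rfl; exact hce hcd
  refine h2.elim ⟨⟨fun i => ![a,b,c,d,e] i, ?_⟩, ?_⟩
  · intro i j h
    fin_cases i <;> fin_cases j <;> first | rfl | simp_all
  · intro i j
    fin_cases i <;> fin_cases j <;>
      simp_all [HVN, graphOfList, hab.symm, hac.symm, had.symm, hbc.symm, hbd.symm,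
        hcd.symm, hae.symm, hbe.symm] <;> first | assumption | exact G.symm.symm _ _ (by assumption)

/-- `v` is outside `K` and adjacent to every vertex of `K` except `x`. -/
def Misses {V : Type*} (G : SimpleGraph V) (K : Finset V) (v x : V) : Prop :=
  v ∉ K ∧ x ∈ K ∧ ¬G.Adj v x ∧ ∀ y ∈ K, y ≠ x → G.Adj v y

/-- `v` is outside `K` and has at most one neighbour in `K`. -/
def InBset {V : Type*} (G : SimpleGraph V) (K : Finset V) (v : V) : Prop :=
  v ∉ K ∧ ∀ x ∈ K, ∀ y ∈ K, G.Adj v x → G.Adj v y → x = y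

lemma tri {V : Type*} [Fintype V] {G : SimpleGraph V} (h2 : IsFreeOf G HVN) {K : Finset V}
    (hKcl : G.IsClique (K : Set V)) (hKcard : K.card = G.cliqueNum)
    {v : V} (hv : v ∉ K) : InBset G K v ∨ ∃ x, Misses G K v x := by
  classical
  by_cases hB : ∀ x ∈ K, ∀ y ∈ K, G.Adj v x → G.Adj v y → x = y
  · exact Or.inl ⟨hv, hB⟩
  push_neg at hB
  obtain ⟨p, hp, q, hq, hvp, hvq, hpq⟩ := hB
  have uniq : ∀ c ∈ K, ∀ d ∈ K, ¬G.Adj v c → ¬G.Adj v d → c = d := by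
    intro c hc d hd hc' hd'
    by_contra hcd
    have npc : p ≠ c := fun h => hc' (h ▸ hvp)
    have npd : p ≠ d := fun h => hd' (h ▸ hvp)
    have nqc : q ≠ c := fun h => hc' (h ▸ hvq)
    have nqd : q ≠ d := fun h => hd' (h ▸ hvq)
    exact noHVN h2 (hKcl hp hq hpq) (hKcl hp hc npc) (hKcl hp hd npd)
      (hKcl hq hc nqc) (hKcl hq hd nqd) (hKcl hc hd hcd)
      hvp.symm hvq.symm (fun h => hc' h.symm) (fun h => hd' h.symm)
  by_cases hall : ∀ a ∈ K, G.Adj v a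
  · exfalso
    have hclique : G.IsClique ((insert v K : Finset V) : Set V) := by
      rintro a ha b hb hab
      rw [Finset.coe_insert, Set.mem_insert_iff] at ha hb
      rcases ha with rfl | ha <;> rcases hb with rfl | hb
      · exact absurd rfl hab
      · exact hall b hb
      · exact (hall a ha).symm
      · exact hKcl ha hb hab
    have hcard := IsClique.card_le_cliqueNum (tc := hclique)
    rw [Finset.card_insert_of_notMem hv] at hcard
    omega
  · push_neg at hall
    obtain ⟨x, hx, hvx⟩ := hall
    refine Or.inr ⟨x, hv, hx, hvx, fun y hy hyx => ?_⟩
    by_contra h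
    exact hyx (uniq y hy x hx h hvx)

lemma Bstable {V : Type*} [Fintype V] {G : SimpleGraph V} (h1 : IsFreeOf G (pK2 2))
    {K : Finset V} (hKcl : G.IsClique (K : Set V)) (hK4 : 4 ≤ K.card)
    {v w : V} (hv : InBset G K v) (hw : InBset G K w) : ¬G.Adj v w := by
  classical
  intro hvw
  have h1c : (K.filter (fun z => G.Adj v z)).card ≤ 1 := by
    rw [Finset.card_le_one]
    intro a ha b hb
    rw [Finset.mem_filter] at ha hb
    exact hv.2 a ha.1 b hb.1 ha.2 hb.2
  have h2c : (K.filter (fun z => G.Adj w z)).card ≤ 1 := by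
    rw [Finset.card_le_one]
    intro a ha b hb
    rw [Finset.mem_filter] at ha hb
    exact hw.2 a ha.1 b hb.1 ha.2 hb.2
  have hsub : K.filter (fun z => ¬(¬G.Adj v z ∧ ¬G.Adj w z)) ⊆
      (K.filter (fun z => G.Adj v z)) ∪ (K.filter (fun z => G.Adj w z)) := by
    intro z hz
    rw [Finset.mem_filter] at hz
    rw [Finset.mem_union, Finset.mem_filter, Finset.mem_filter]
    tauto
  have hkey : (K.filter (fun z => ¬(¬G.Adj v z ∧ ¬G.Adj w z))).card ≤ 2 :=
    le_trans (Finset.card_le_card hsub) (le_trans (Finset.card_union_le _ _) (by omega))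
  have hsum := Finset.card_filter_add_card_filter_not
    (s := K) (p := fun z => ¬G.Adj v z ∧ ¬G.Adj w z)
  have hTcard : 2 ≤ (K.filter (fun z => ¬G.Adj v z ∧ ¬G.Adj w z)).card := by omega
  obtain ⟨x, hx, y, hy, hxy⟩ := Finset.one_lt_card.mp
    (show 1 < (K.filter (fun z => ¬G.Adj v z ∧ ¬G.Adj w z)).card by omega)
  rw [Finset.mem_filter] at hx hy
  exact no2K2 h1 hvw (hKcl hx.1 hy.1 hxy) hx.2.1 hy.2.1 hx.2.2 hy.2.2

lemma Astable {V : Type*} [Fintype V] {G : SimpleGraph V} {K : Finset V}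
    (hKcl : G.IsClique (K : Set V)) (hKcard : K.card = G.cliqueNum)
    {v w x : V} (hv : Misses G K v x) (hw : Misses G K w x) (hvw : v ≠ w) : ¬G.Adj v w := by
  classical
  intro hadj
  have hclique : G.IsClique ((insert v (insert w (K.erase x)) : Finset V) : Set V) := by
    rintro a ha b hb hab
    simp only [Finset.coe_insert, Set.mem_insert_iff, Finset.mem_coe, Finset.mem_erase]
      at ha hb
    rcases ha with rfl | rfl | ⟨hax, haK⟩ <;> rcases hb with rfl | rfl | ⟨hbx, hbK⟩
    · exact absurd rfl hab
    · exact hadj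
    · exact hv.2.2.2 b hbK hbx
    · exact hadj.symm
    · exact absurd rfl hab
    · exact hw.2.2.2 b hbK hbx
    · exact (hv.2.2.2 a haK hax).symm
    · exact (hw.2.2.2 a haK hax).symm
    · exact hKcl haK hbK hab
  have hcard := IsClique.card_le_cliqueNum (tc := hclique)
  have hxK : x ∈ K := hv.2.1
  have hwmem : w ∉ K.erase x := fun h => hw.1 (Finset.mem_of_mem_erase h)
  have hvmem : v ∉ insert w (K.erase x) := by
    intro h
    rcases Finset.mem_insert.mp h with h' | h'
    · exact hvw h'
    · exact hv.1 (Finset.mem_of_mem_erase h')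
  rw [Finset.card_insert_of_notMem hvmem, Finset.card_insert_of_notMem hwmem,
    Finset.card_erase_of_mem hxK] at hcard
  have : 1 ≤ K.card := Finset.card_pos.mpr ⟨x, hxK⟩
  omega

lemma Across {V : Type*} [Fintype V] {G : SimpleGraph V} (h2 : IsFreeOf G HVN)
    {K : Finset V} (hKcl : G.IsClique (K : Set V)) (hK4 : 4 ≤ K.card)
    {v w x y : V} (hv : Misses G K v x) (hw : Misses G K w y) (hxy : x ≠ y) : G.Adj v w := by
  classical
  by_contra hvw
  have hyK : y ∈ K := hw.2.1
  have hxK : x ∈ K := hv.2.1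
  have hyx : y ∈ K.erase x := Finset.mem_erase.mpr ⟨fun h => hxy h.symm, hyK⟩
  have hTcard : 1 < ((K.erase x).erase y).card := by
    rw [Finset.card_erase_of_mem hyx, Finset.card_erase_of_mem hxK]
    omega
  obtain ⟨z, hz, t, ht, hzt⟩ := Finset.one_lt_card.mp hTcard
  obtain ⟨hzy, hzx, hzK⟩ : z ≠ y ∧ z ≠ x ∧ z ∈ K := by
    rw [Finset.mem_erase, Finset.mem_erase] at hz; tauto
  obtain ⟨hty, htx, htK⟩ : t ≠ y ∧ t ≠ x ∧ t ∈ K := by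
    rw [Finset.mem_erase, Finset.mem_erase] at ht; tauto
  exact noHVN h2 (hKcl hzK htK hzt) (hKcl hzK hyK hzy) ((hv.2.2.2 z hzK hzx).symm)
    (hKcl htK hyK hty) ((hv.2.2.2 t htK htx).symm)
    ((hv.2.2.2 y hyK (fun h => hxy h.symm)).symm)
    ((hw.2.2.2 z hzK hzy).symm) ((hw.2.2.2 t htK hty).symm)
    (fun h => hw.2.2.1 h.symm) hvw

lemma Bchoice {V : Type*} [Fintype V] {G : SimpleGraph V} (h2 : IsFreeOf G HVN)
    {K : Finset V} (hKcl : G.IsClique (K : Set V)) (hKcard : K.card = G.cliqueNum)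
    (hK4 : 4 ≤ K.card) {b : V} (hb : InBset G K b) :
    ∃ x ∈ K, ¬G.Adj b x ∧ ∀ u, Misses G K u x → ¬G.Adj b u := by
  classical
  by_contra hcon
  push_neg at hcon
  have hf : ∀ x : V, ∃ u, x ∈ K → ((u = x ∨ Misses G K u x) ∧ G.Adj b u) := by
    intro x
    by_cases hx : x ∈ K
    · by_cases hbx : G.Adj b x
      · exact ⟨x, fun _ => ⟨Or.inl rfl, hbx⟩⟩
      · obtain ⟨u, hu1, hu2⟩ := hcon x hx hbx
        exact ⟨u, fun _ => ⟨Or.inr hu1, hu2⟩⟩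
    · exact ⟨b, fun h => absurd h hx⟩
  choose f hf using hf
  have hinj : Set.InjOn f K := by
    intro p hp q hq hfpq
    rcases (hf p hp).1 with h | h <;> rcases (hf q hq).1 with h' | h'
    · rw [← h, ← h', hfpq]
    · exfalso
      have : Misses G K (f p) q := hfpq ▸ h'
      rw [h] at this
      exact this.1 hp
    · exfalso
      have : Misses G K (f q) p := hfpq ▸ h
      rw [h'] at this
      exact this.1 hq
    · by_contra hpq
      have hadj : G.Adj (f p) q := h.2.2.2 q hq (fun hh => hpq hh.symm)
      rw [hfpq] at hadj
      exact h'.2.2.1 hadj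
  have hbni : b ∉ K.image f := by
    intro hmem
    obtain ⟨p, hp, hfp⟩ := Finset.mem_image.mp hmem
    exact G.loopless.irrefl b (hfp ▸ (hf p hp).2)
  have hclique : G.IsClique ((insert b (K.image f) : Finset V) : Set V) := by
    rintro u hu u' hu' huu'
    simp only [Finset.coe_insert, Set.mem_insert_iff, Finset.mem_coe,
      Finset.mem_image] at hu hu'
    rcases hu with rfl | ⟨p, hp, rfl⟩ <;> rcases hu' with rfl | ⟨q, hq, rfl⟩
    · exact absurd rfl huu'
    · exact (hf q hq).2
    · exact ((hf p hp).2).symm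
    · have hpq : p ≠ q := fun h => huu' (h ▸ rfl)
      rcases (hf p hp).1 with h | h <;> rcases (hf q hq).1 with h' | h'
      · rw [h, h']; exact hKcl hp hq hpq
      · rw [h]; exact (h'.2.2.2 p hp hpq).symm
      · rw [h']; exact h.2.2.2 q hq (fun hh => hpq hh.symm)
      · exact Across h2 hKcl hK4 h h' hpq
  have hcard := IsClique.card_le_cliqueNum (tc := hclique)
  rw [Finset.card_insert_of_notMem hbni, Finset.card_image_of_injOn hinj, hKcard] at hcard
  omega

theorem chromatic_eq_of_2K2_HVN_free {V : Type*} [Fintype V] (G : SimpleGraph V)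
    (h1 : IsFreeOf G (pK2 2)) (h2 : IsFreeOf G HVN) (hω : 4 ≤ G.cliqueNum) :
    G.chromaticNumber = (G.cliqueNum : ℕ∞) := by
  classical
  obtain ⟨K, hK⟩ := G.exists_isNClique_cliqueNum
  have hKcl : G.IsClique (K : Set V) := hK.isClique
  have hKcard : K.card = G.cliqueNum := hK.card_eq
  have hK4 : 4 ≤ K.card := by omega
  have Hassign : ∀ v : V, ∃ x, x ∈ K ∧ (v = x ∨ Misses G K v x ∨
      (InBset G K v ∧ ¬G.Adj v x ∧ ∀ u, Misses G K u x → ¬G.Adj v u)) := by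
    intro v
    by_cases hv : v ∈ K
    · exact ⟨v, hv, Or.inl rfl⟩
    · rcases tri h2 hKcl hKcard hv with hB | ⟨x, hx⟩
      · obtain ⟨x, hxK, hbx, hall⟩ := Bchoice h2 hKcl hKcard hK4 hB
        exact ⟨x, hxK, Or.inr (Or.inr ⟨hB, hbx, hall⟩)⟩
      · exact ⟨x, hx.2.1, Or.inr (Or.inl hx)⟩
  choose c hcK hc using Hassign
  have key : ∀ v w : V, G.Adj v w → c v = c w → False := by
    intro v w hadj hcc
    have hcv := hc v
    have hcw := hc w
    rw [← hcc] at hcw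
    rcases hcv with hv | hv | hv <;> rcases hcw with hw | hw | hw
    · exact G.loopless.irrefl w ((hv.trans hw.symm) ▸ hadj)
    · exact hw.2.2.1 (by rw [← hv]; exact hadj.symm)
    · exact hw.2.1 (by rw [← hv]; exact hadj.symm)
    · exact hv.2.2.1 (by rw [← hw]; exact hadj)
    · exact Astable hKcl hKcard hv hw hadj.ne hadj
    · exact (hw.2.2 v hv) hadj.symm
    · exact hv.2.1 (by rw [← hw]; exact hadj)
    · exact (hv.2.2 w hw) hadj
    · exact Bstable h1 hKcl hK4 hv.1 hw.1 hadj
  let C : G.Coloring ↥K := Coloring.mk (fun v => (⟨c v, hcK v⟩ : ↥K))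
    (fun {v w} hadj h => key v w hadj (congrArg Subtype.val h))
  have hcol : G.Colorable G.cliqueNum := by
    have hc' := C.colorable
    rwa [Fintype.card_coe, hKcard] at hc'
  refine le_antisymm hcol.chromaticNumber_le ?_
  have hlow := hKcl.card_le_chromaticNumber
  rwa [hKcard] at hlow
end

section
/- If G is a {2K_2, K_5−e}-free graph with ω(G) = 4, then χ(G) ≤ 6. -/
open SimpleGraph

/-- `K_5` minus an edge. -/
def K5e : SimpleGraph (Fin 5) :=
  graphOfList 5 [(0,2),(0,3),(0,4),(1,2),(1,3),(1,4),(2,3),(2,4),(3,4)]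


instance : DecidableRel K5e.Adj := fun a b =>
  decidable_of_iff' _ (SimpleGraph.fromRel_adj
    (fun a b : Fin 5 => ((a : ℕ), (b : ℕ)) ∈
      [(0,2),(0,3),(0,4),(1,2),(1,3),(1,4),(2,3),(2,4),(3,4)]) a b)

lemma twoK2_helper {V : Type*} {G : SimpleGraph V} (h1 : IsFreeOf G (pK2 2)) {x y p q : V}
    (hxy : G.Adj x y) (hpq : G.Adj p q)
    (hxp : ¬G.Adj x p) (hxq : ¬G.Adj x q) (hyp : ¬G.Adj y p) (hyq : ¬G.Adj y q)
    (hxp' : x ≠ p) (hxq' : x ≠ q) (hyp' : y ≠ p) (hyq' : y ≠ q) : False := by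
  have hxy' : x ≠ y := hxy.ne
  have hpq' : p ≠ q := hpq.ne
  have hyx := hxy.symm
  have hqp := hpq.symm
  have hpx : ¬G.Adj p x := fun h => hxp h.symm
  have hqx : ¬G.Adj q x := fun h => hxq h.symm
  have hpy : ¬G.Adj p y := fun h => hyp h.symm
  have hqy : ¬G.Adj q y := fun h => hyq h.symm
  have hE : IsEmpty ((pK2 2) ↪g G) := h1
  refine hE.false ⟨⟨fun z => ![![x, y], ![p, q]] z.1 z.2, ?_⟩, @fun u w => ?_⟩
  · rintro ⟨u1, u2⟩ ⟨w1, w2⟩ h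
    fin_cases u1 <;> fin_cases u2 <;> fin_cases w1 <;> fin_cases w2 <;> simp_all
  · obtain ⟨u1, u2⟩ := u
    obtain ⟨w1, w2⟩ := w
    fin_cases u1 <;> fin_cases u2 <;> fin_cases w1 <;> fin_cases w2 <;>
      simp_all [pK2, G.irrefl]

lemma no_three {V : Type*} [Fintype V] {G : SimpleGraph V}
    (h2 : IsFreeOf G K5e) (hω : G.cliqueNum = 4) {p q r s x : V}
    (hpq : G.Adj p q) (hpr : G.Adj p r) (hps : G.Adj p s)
    (hqr : G.Adj q r) (hqs : G.Adj q s) (hrs : G.Adj r s)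
    (hxp : G.Adj x p) (hxq : G.Adj x q) (hxr : G.Adj x r) (hxs' : x ≠ s) : False := by
  classical
  have hxps : x ≠ p := hxp.ne
  have hxqs : x ≠ q := hxq.ne
  have hxrs : x ≠ r := hxr.ne
  have hpqn : p ≠ q := hpq.ne
  have hprn : p ≠ r := hpr.ne
  have hpsn : p ≠ s := hps.ne
  have hqrn : q ≠ r := hqr.ne
  have hqsn : q ≠ s := hqs.ne
  have hrsn : r ≠ s := hrs.ne
  by_cases hxs : G.Adj x s
  · have hclique : G.IsNClique 5 {x, p, q, r, s} := by
      constructor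
      · intro u hu v hv huv
        simp only [Finset.coe_insert, Set.mem_insert_iff, Finset.coe_singleton,
          Set.mem_singleton_iff] at hu hv
        rcases hu with rfl | rfl | rfl | rfl | rfl <;> rcases hv with rfl | rfl | rfl | rfl | rfl <;>
          first
            | exact absurd rfl huv
            | assumption
            | exact hxp.symm
            | exact hxq.symm
            | exact hxr.symm
            | exact hxs.symm
            | exact hpq.symm
            | exact hpr.symm
            | exact hps.symm
            | exact hqr.symm
            | exact hqs.symm
            | exact hrs.symm
      · rw [Finset.card_insert_of_notMem (by simp [hxps, hxqs, hxrs, hxs']),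
          Finset.card_insert_of_notMem (by simp [hpqn, hprn, hpsn]),
          Finset.card_insert_of_notMem (by simp [hqrn, hqsn]),
          Finset.card_insert_of_notMem (by simp [hrsn]), Finset.card_singleton]
    have h5 : (5 : ℕ) ≤ G.cliqueNum := by
      have := @SimpleGraph.IsClique.card_le_cliqueNum V G _ _ hclique.isClique
      simpa [hclique.card_eq] using this
    omega
  · have hE : IsEmpty (K5e ↪g G) := h2
    have hsx : ¬G.Adj s x := fun h => hxs h.symm
    have hsp := hps.symm
    have hsq := hqs.symm
    have hsr := hrs.symm
    have hpx := hxp.symm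
    have hqx := hxq.symm
    have hrx := hxr.symm
    have hqp := hpq.symm
    have hrp := hpr.symm
    have hrq := hqr.symm
    refine hE.false ⟨⟨![x, s, p, q, r], ?_⟩, @fun u w => ?_⟩
    · intro u w h
      fin_cases u <;> fin_cases w <;> simp_all
    · fin_cases u <;> fin_cases w <;>
        simp_all [G.irrefl, DFunLike.coe,
          (by decide : ¬ K5e.Adj 0 1), (by decide : ¬ K5e.Adj 1 0),
          (by decide : K5e.Adj 0 2), (by decide : K5e.Adj 0 3), (by decide : K5e.Adj 0 4),
          (by decide : K5e.Adj 1 2), (by decide : K5e.Adj 1 3), (by decide : K5e.Adj 1 4),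
          (by decide : K5e.Adj 2 3), (by decide : K5e.Adj 2 4), (by decide : K5e.Adj 3 4),
          (by decide : K5e.Adj 2 0), (by decide : K5e.Adj 3 0), (by decide : K5e.Adj 4 0),
          (by decide : K5e.Adj 2 1), (by decide : K5e.Adj 3 1), (by decide : K5e.Adj 4 1),
          (by decide : K5e.Adj 3 2), (by decide : K5e.Adj 4 2), (by decide : K5e.Adj 4 3),
          (by decide : ∀ i : Fin 5, ¬ K5e.Adj i i)]

theorem chromatic_le_six_of_2K2_K5e_free {V : Type*} [Fintype V] (G : SimpleGraph V)
    (h1 : IsFreeOf G (pK2 2)) (h2 : IsFreeOf G K5e) (hω : G.cliqueNum = 4) :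
    G.chromaticNumber ≤ 6 := by
  classical
  obtain ⟨s, hs⟩ := G.exists_isNClique_cliqueNum
  rw [hω] at hs
  obtain ⟨a, t, hat, rfl, ht3⟩ := Finset.card_eq_succ.mp hs.card_eq
  obtain ⟨b, c, d, hbc, hbd, hcd, rfl⟩ := Finset.card_eq_three.mp ht3
  have hab : a ≠ b := by rintro rfl; simp at hat
  have hac : a ≠ c := by rintro rfl; simp at hat
  have had : a ≠ d := by rintro rfl; simp at hat
  have hK := hs.isClique
  have Aab : G.Adj a b := hK (by simp) (by simp) hab
  have Aac : G.Adj a c := hK (by simp) (by simp) hac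
  have Aad : G.Adj a d := hK (by simp) (by simp) had
  have Abc : G.Adj b c := hK (by simp) (by simp) hbc
  have Abd : G.Adj b d := hK (by simp) (by simp) hbd
  have Acd : G.Adj c d := hK (by simp) (by simp) hcd
  have key2 : ∀ x, x ≠ a → x ≠ b → x ≠ c → x ≠ d →
      ((¬G.Adj x a ∧ ¬G.Adj x b) ∨ (¬G.Adj x a ∧ ¬G.Adj x c) ∨ (¬G.Adj x a ∧ ¬G.Adj x d) ∨
       (¬G.Adj x b ∧ ¬G.Adj x c) ∨ (¬G.Adj x b ∧ ¬G.Adj x d) ∨ (¬G.Adj x c ∧ ¬G.Adj x d)) := by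
    intro x hxa hxb hxc hxd
    have n1 : ¬(G.Adj x a ∧ G.Adj x b ∧ G.Adj x c) :=
      fun ⟨u, v, w⟩ => no_three h2 hω Aab Aac Aad Abc Abd Acd u v w hxd
    have n2 : ¬(G.Adj x a ∧ G.Adj x b ∧ G.Adj x d) :=
      fun ⟨u, v, w⟩ => no_three h2 hω Aab Aad Aac Abd Abc Acd.symm u v w hxc
    have n3 : ¬(G.Adj x a ∧ G.Adj x c ∧ G.Adj x d) :=
      fun ⟨u, v, w⟩ => no_three h2 hω Aac Aad Aab Acd Abc.symm Abd.symm u v w hxb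
    have n4 : ¬(G.Adj x b ∧ G.Adj x c ∧ G.Adj x d) :=
      fun ⟨u, v, w⟩ => no_three h2 hω Abc Abd Aab.symm Acd Aac.symm Aad.symm u v w hxa
    by_cases ga : G.Adj x a
    · by_cases gb : G.Adj x b
      · exact Or.inr (Or.inr (Or.inr (Or.inr (Or.inr
          ⟨fun gc => n1 ⟨ga, gb, gc⟩, fun gd => n2 ⟨ga, gb, gd⟩⟩))))
      · by_cases gc : G.Adj x c
        · exact Or.inr (Or.inr (Or.inr (Or.inr (Or.inl
            ⟨gb, fun gd => n3 ⟨ga, gc, gd⟩⟩))))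
        · exact Or.inr (Or.inr (Or.inr (Or.inl ⟨gb, gc⟩)))
    · by_cases gb : G.Adj x b
      · by_cases gc : G.Adj x c
        · exact Or.inr (Or.inr (Or.inl ⟨ga, fun gd => n4 ⟨gb, gc, gd⟩⟩))
        · exact Or.inr (Or.inl ⟨ga, gc⟩)
      · exact Or.inl ⟨ga, gb⟩
  let col : V → Fin 6 := fun x =>
    if x = a then 2 else if x = b then 3 else if x = c then 5 else if x = d then 4
    else if ¬G.Adj x a ∧ ¬G.Adj x b then 0
    else if ¬G.Adj x a ∧ ¬G.Adj x c then 1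
    else if ¬G.Adj x a ∧ ¬G.Adj x d then 2
    else if ¬G.Adj x b ∧ ¬G.Adj x c then 3
    else if ¬G.Adj x b ∧ ¬G.Adj x d then 4
    else 5
  have colA : col a = 2 := by simp [col]
  have colB : col b = 3 := by simp [col, Ne.symm hab]
  have colC : col c = 5 := by simp [col, Ne.symm hac, Ne.symm hbc]
  have colD : col d = 4 := by simp [col, Ne.symm had, Ne.symm hbd, Ne.symm hcd]
  have P : ∀ x, x ≠ a → x ≠ b → x ≠ c → x ≠ d →
      (col x = 0 → ¬G.Adj x a ∧ ¬G.Adj x b) ∧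
      (col x = 1 → ¬G.Adj x a ∧ ¬G.Adj x c) ∧
      (col x = 2 → ¬G.Adj x a ∧ ¬G.Adj x d) ∧
      (col x = 3 → ¬G.Adj x b ∧ ¬G.Adj x c) ∧
      (col x = 4 → ¬G.Adj x b ∧ ¬G.Adj x d) ∧
      (col x = 5 → ¬G.Adj x c ∧ ¬G.Adj x d) := by
    intro x hxa hxb hxc hxd
    have hk := key2 x hxa hxb hxc hxd
    simp only [col, if_neg hxa, if_neg hxb, if_neg hxc, if_neg hxd]
    split_ifs with e1 e2 e3 e4 e5
    · exact ⟨fun _ => e1, fun hx => absurd hx (by decide), fun hx => absurd hx (by decide),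
        fun hx => absurd hx (by decide), fun hx => absurd hx (by decide),
        fun hx => absurd hx (by decide)⟩
    · exact ⟨fun hx => absurd hx (by decide), fun _ => e2, fun hx => absurd hx (by decide),
        fun hx => absurd hx (by decide), fun hx => absurd hx (by decide),
        fun hx => absurd hx (by decide)⟩
    · exact ⟨fun hx => absurd hx (by decide), fun hx => absurd hx (by decide), fun _ => e3,
        fun hx => absurd hx (by decide), fun hx => absurd hx (by decide),
        fun hx => absurd hx (by decide)⟩
    · exact ⟨fun hx => absurd hx (by decide), fun hx => absurd hx (by decide),
        fun hx => absurd hx (by decide), fun _ => e4, fun hx => absurd hx (by decide),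
        fun hx => absurd hx (by decide)⟩
    · exact ⟨fun hx => absurd hx (by decide), fun hx => absurd hx (by decide),
        fun hx => absurd hx (by decide), fun hx => absurd hx (by decide), fun _ => e5,
        fun hx => absurd hx (by decide)⟩
    · refine ⟨fun hx => absurd hx (by decide), fun hx => absurd hx (by decide),
        fun hx => absurd hx (by decide), fun hx => absurd hx (by decide),
        fun hx => absurd hx (by decide), fun _ => ?_⟩
      rcases hk with h | h | h | h | h | h
      exacts [absurd h e1, absurd h e2, absurd h e3, absurd h e4, absurd h e5, h]
  have h6 : ∀ k : Fin 6, k = 0 ∨ k = 1 ∨ k = 2 ∨ k = 3 ∨ k = 4 ∨ k = 5 := by decide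
  have valid : ∀ {v w : V}, G.Adj v w → col v ≠ col w := by
    intro v w hvw heq
    by_cases hv : v = a ∨ v = b ∨ v = c ∨ v = d
    · by_cases hw : w = a ∨ w = b ∨ w = c ∨ w = d
      · rcases hv with rfl | rfl | rfl | rfl <;> rcases hw with rfl | rfl | rfl | rfl <;>
          first
            | exact G.irrefl hvw
            | (rw [colA] at heq; rw [colB] at heq; exact absurd heq (by decide))
            | (rw [colA] at heq; rw [colC] at heq; exact absurd heq (by decide))
            | (rw [colA] at heq; rw [colD] at heq; exact absurd heq (by decide))
            | (rw [colB] at heq; rw [colA] at heq; exact absurd heq (by decide))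
            | (rw [colB] at heq; rw [colC] at heq; exact absurd heq (by decide))
            | (rw [colB] at heq; rw [colD] at heq; exact absurd heq (by decide))
            | (rw [colC] at heq; rw [colA] at heq; exact absurd heq (by decide))
            | (rw [colC] at heq; rw [colB] at heq; exact absurd heq (by decide))
            | (rw [colC] at heq; rw [colD] at heq; exact absurd heq (by decide))
            | (rw [colD] at heq; rw [colA] at heq; exact absurd heq (by decide))
            | (rw [colD] at heq; rw [colB] at heq; exact absurd heq (by decide))
            | (rw [colD] at heq; rw [colC] at heq; exact absurd heq (by decide))
      · push_neg at hw
        obtain ⟨hwa, hwb, hwc, hwd⟩ := hw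
        have hP := P w hwa hwb hwc hwd
        rcases hv with rfl | rfl | rfl | rfl
        · exact (hP.2.2.1 (by rw [← heq, colA])).1 hvw.symm
        · exact (hP.2.2.2.1 (by rw [← heq, colB])).1 hvw.symm
        · exact (hP.2.2.2.2.2 (by rw [← heq, colC])).1 hvw.symm
        · exact (hP.2.2.2.2.1 (by rw [← heq, colD])).2 hvw.symm
    · push_neg at hv
      obtain ⟨hva, hvb, hvc, hvd⟩ := hv
      have hPv := P v hva hvb hvc hvd
      by_cases hw : w = a ∨ w = b ∨ w = c ∨ w = d
      · rcases hw with rfl | rfl | rfl | rfl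
        · exact (hPv.2.2.1 (by rw [heq, colA])).1 hvw
        · exact (hPv.2.2.2.1 (by rw [heq, colB])).1 hvw
        · exact (hPv.2.2.2.2.2 (by rw [heq, colC])).1 hvw
        · exact (hPv.2.2.2.2.1 (by rw [heq, colD])).2 hvw
      · push_neg at hw
        obtain ⟨hwa, hwb, hwc, hwd⟩ := hw
        have hPw := P w hwa hwb hwc hwd
        rcases h6 (col v) with hk | hk | hk | hk | hk | hk
        · obtain ⟨m1, m2⟩ := hPv.1 hk
          obtain ⟨m3, m4⟩ := hPw.1 (heq ▸ hk)
          exact twoK2_helper h1 hvw Aab m1 m2 m3 m4 hva hvb hwa hwb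
        · obtain ⟨m1, m2⟩ := hPv.2.1 hk
          obtain ⟨m3, m4⟩ := hPw.2.1 (heq ▸ hk)
          exact twoK2_helper h1 hvw Aac m1 m2 m3 m4 hva hvc hwa hwc
        · obtain ⟨m1, m2⟩ := hPv.2.2.1 hk
          obtain ⟨m3, m4⟩ := hPw.2.2.1 (heq ▸ hk)
          exact twoK2_helper h1 hvw Aad m1 m2 m3 m4 hva hvd hwa hwd
        · obtain ⟨m1, m2⟩ := hPv.2.2.2.1 hk
          obtain ⟨m3, m4⟩ := hPw.2.2.2.1 (heq ▸ hk)
          exact twoK2_helper h1 hvw Abc m1 m2 m3 m4 hvb hvc hwb hwc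
        · obtain ⟨m1, m2⟩ := hPv.2.2.2.2.1 hk
          obtain ⟨m3, m4⟩ := hPw.2.2.2.2.1 (heq ▸ hk)
          exact twoK2_helper h1 hvw Abd m1 m2 m3 m4 hvb hvd hwb hwd
        · obtain ⟨m1, m2⟩ := hPv.2.2.2.2.2 hk
          obtain ⟨m3, m4⟩ := hPw.2.2.2.2.2 (heq ▸ hk)
          exact twoK2_helper h1 hvw Acd m1 m2 m3 m4 hvc hvd hwc hwd
  exact Colorable.chromaticNumber_le ⟨Coloring.mk col valid⟩
end

section
/- If G is a {2K_2, K_5−e}-free graph with ω(G) ≥ 5, then χ(G) = ω(G). -/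
open SimpleGraph

lemma k5e_embed {V : Type*} (G : SimpleGraph V) {v c x y z : V}
    (hvx : G.Adj v x) (hvy : G.Adj v y) (hvz : G.Adj v z)
    (hvc : ¬ G.Adj v c) (hvc' : v ≠ c)
    (hcx : G.Adj c x) (hcy : G.Adj c y) (hcz : G.Adj c z)
    (hxy : G.Adj x y) (hxz : G.Adj x z) (hyz : G.Adj y z) :
    Nonempty (K5e ↪g G) := by
  have inj : Function.Injective (![v, c, x, y, z]) := by
    have h1 := hvx.ne; have h2 := hvy.ne; have h3 := hvz.ne
    have h4 := hcx.ne; have h5 := hcy.ne; have h6 := hcz.ne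
    have h7 := hxy.ne; have h8 := hxz.ne; have h9 := hyz.ne
    intro a b hab
    fin_cases a <;> fin_cases b <;> simp_all [Fin.ext_iff]
  refine ⟨⟨⟨![v, c, x, y, z], inj⟩, ?_⟩⟩
  intro a b
  fin_cases a <;> fin_cases b <;>
    simp [K5e, graphOfList, G.ne_of_adj, hvc'] <;>
    first
      | assumption
      | exact Adj.symm (by assumption)
      | exact fun h => hvc (SimpleGraph.Adj.symm h)
      | exact hvc (SimpleGraph.Adj.symm (by assumption))
      | exact hvc (by assumption)
      | exact iff_of_true (by first | assumption | exact Adj.symm (by assumption)) (by decide)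
      | exact iff_of_false (by first | assumption | exact fun h => hvc (SimpleGraph.Adj.symm h)) (by decide)

lemma twoK2_embed {V : Type*} (G : SimpleGraph V) {u v a b : V}
    (huv : G.Adj u v) (hab : G.Adj a b)
    (hua : ¬ G.Adj u a) (hub : ¬ G.Adj u b) (hva : ¬ G.Adj v a) (hvb : ¬ G.Adj v b)
    (nua : u ≠ a) (nub : u ≠ b) (nva : v ≠ a) (nvb : v ≠ b) :
    Nonempty (pK2 2 ↪g G) := by
  have h1 := huv.ne; have h2 := hab.ne
  refine ⟨⟨⟨fun p => ![![u, v], ![a, b]] p.1 p.2, ?_⟩, ?_⟩⟩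
  · intro p q hpq
    obtain ⟨p1, p2⟩ := p; obtain ⟨q1, q2⟩ := q
    fin_cases p1 <;> fin_cases p2 <;> fin_cases q1 <;> fin_cases q2 <;>
      simp_all [Fin.ext_iff, Prod.ext_iff]
  · intro p q
    obtain ⟨p1, p2⟩ := p; obtain ⟨q1, q2⟩ := q
    fin_cases p1 <;> fin_cases p2 <;> fin_cases q1 <;> fin_cases q2 <;>
      simp [pK2] <;>
      first
        | assumption
        | exact Adj.symm (by assumption)
        | exact fun h => hua (SimpleGraph.Adj.symm h)
        | exact fun h => hub (SimpleGraph.Adj.symm h)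
        | exact fun h => hva (SimpleGraph.Adj.symm h)
        | exact fun h => hvb (SimpleGraph.Adj.symm h)

/-- An explicit proper coloring of the Petersen graph (Kneser K(5,2)) where the
color of a 2-set avoids that 2-set. -/
def petF (s : Finset (Fin 5)) : Fin 5 :=
  if s = {0,1} then 2 else if s = {0,2} then 1 else if s = {0,3} then 1
  else if s = {0,4} then 1 else if s = {1,2} then 3 else if s = {1,3} then 0
  else if s = {1,4} then 0 else if s = {2,3} then 4 else if s = {2,4} then 3
  else if s = {3,4} then 0 else 0

lemma petF_not_mem : ∀ s : Finset (Fin 5), s.card = 2 → petF s ∉ s := by decide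
lemma petF_ne : ∀ s t : Finset (Fin 5), s.card = 2 → t.card = 2 → Disjoint s t →
    petF s ≠ petF t := by decide

theorem chromatic_eq_of_2K2_K5e_free {V : Type*} [Fintype V] (G : SimpleGraph V)
    (h1 : IsFreeOf G (pK2 2)) (h2 : IsFreeOf G K5e) (hω : 5 ≤ G.cliqueNum) :
    G.chromaticNumber = (G.cliqueNum : ℕ∞) := by
  classical
  obtain ⟨K, hK⟩ := G.exists_isNClique_cliqueNum
  have hcard : K.card = G.cliqueNum := hK.card_eq
  have hclique : G.IsClique (K : Set V) := hK.isClique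
  -- maximality of K
  have hmax : ∀ v ∉ K, ∃ k ∈ K, ¬ G.Adj v k := by
    intro v hv
    by_contra hcon
    push_neg at hcon
    have hcl : G.IsClique ((insert v K : Finset V) : Set V) := by
      rw [Finset.coe_insert]
      exact hclique.insert (fun b hb hne => hcon b hb)
    have hle : (insert v K).card ≤ G.cliqueNum :=
      IsClique.card_le_cliqueNum (tc := hcl)
    rw [Finset.card_insert_of_notMem hv, hcard] at hle
    omega
  -- neighborhoods in K
  set Nk : V → Finset V := fun v => K.filter (fun k => G.Adj v k) with hNk
  have hNkmem : ∀ v k, k ∈ Nk v ↔ k ∈ K ∧ G.Adj v k := by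
    intro v k; simp [hNk]
  have hNksub : ∀ v, Nk v ⊆ K := fun v => Finset.filter_subset _ _
  -- every outside vertex has at most 2 neighbors in K
  have hdeg : ∀ v ∉ K, (Nk v).card ≤ 2 := by
    intro v hv
    by_contra hgt
    push_neg at hgt
    obtain ⟨t, hts, ht3⟩ := Finset.exists_subset_card_eq (show 3 ≤ (Nk v).card from hgt)
    rw [Finset.card_eq_three] at ht3
    obtain ⟨x, y, z, hxy, hxz, hyz, rfl⟩ := ht3
    have hx := (hNkmem v x).1 (hts (by simp))
    have hy := (hNkmem v y).1 (hts (by simp))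
    have hz := (hNkmem v z).1 (hts (by simp))
    obtain ⟨c, hcK, hcadj⟩ := hmax v hv
    have hvc' : v ≠ c := fun h => hv (h ▸ hcK)
    have hcx : c ≠ x := fun h => hcadj (h ▸ hx.2)
    have hcy : c ≠ y := fun h => hcadj (h ▸ hy.2)
    have hcz : c ≠ z := fun h => hcadj (h ▸ hz.2)
    exact h2.false (k5e_embed G hx.2 hy.2 hz.2 hcadj hvc'
      (hclique hcK hx.1 hcx) (hclique hcK hy.1 hcy) (hclique hcK hz.1 hcz)
      (hclique hx.1 hy.1 hxy) (hclique hx.1 hz.1 hxz)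
      (hclique hy.1 hz.1 hyz)).some
  -- common non-neighbors of an outside edge
  have hcommon : ∀ u w, u ∉ K → w ∉ K → G.Adj u w →
      ((K \ Nk u) ∩ (K \ Nk w)).card ≤ 1 := by
    intro u w hu hw huw
    by_contra hgt
    push_neg at hgt
    obtain ⟨t, hts, ht2⟩ := Finset.exists_subset_card_eq
      (show 2 ≤ ((K \ Nk u) ∩ (K \ Nk w)).card from hgt)
    rw [Finset.card_eq_two] at ht2
    obtain ⟨a, b, hne, rfl⟩ := ht2
    have ha := hts (by simp : a ∈ ({a, b} : Finset V))
    have hb := hts (by simp : b ∈ ({a, b} : Finset V))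
    rw [Finset.mem_inter, Finset.mem_sdiff, Finset.mem_sdiff] at ha hb
    have hua : ¬ G.Adj u a := fun h => ha.1.2 ((hNkmem u a).2 ⟨ha.1.1, h⟩)
    have hub : ¬ G.Adj u b := fun h => hb.1.2 ((hNkmem u b).2 ⟨hb.1.1, h⟩)
    have hwa : ¬ G.Adj w a := fun h => ha.2.2 ((hNkmem w a).2 ⟨ha.2.1, h⟩)
    have hwb : ¬ G.Adj w b := fun h => hb.2.2 ((hNkmem w b).2 ⟨hb.2.1, h⟩)
    have hab : G.Adj a b := hclique ha.1.1 hb.1.1 hne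
    exact h1.false (twoK2_embed G huw hab hua hub hwa hwb
      (fun h => hu (h ▸ ha.1.1)) (fun h => hu (h ▸ hb.1.1))
      (fun h => hw (h ▸ ha.2.1)) (fun h => hw (h ▸ hb.2.1))).some
  -- enough: find a proper coloring with colors in K
  suffices hcol : ∃ col : V → ↥K, ∀ a b, G.Adj a b → col a ≠ col b by
    obtain ⟨col, hcol⟩ := hcol
    have C : G.Coloring ↥K := Coloring.mk col (fun hab => hcol _ _ hab)
    have hcolorable : G.Colorable K.card := by
      have := C.colorable
      rwa [Fintype.card_coe] at this
    refine le_antisymm ?_ ?_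
    · have := hcolorable.chromaticNumber_le
      rwa [hcard] at this
    · have := hclique.card_le_chromaticNumber
      rwa [hcard] at this
  by_cases hE : ∃ u, u ∉ K ∧ ∃ w, w ∉ K ∧ G.Adj u w
  case neg =>
    -- no edge outside K
    push_neg at hE
    refine ⟨fun v => if h : v ∈ K then ⟨v, h⟩
      else ⟨(hmax v h).choose, (hmax v h).choose_spec.1⟩, ?_⟩
    intro a b hab heq
    dsimp only at heq
    by_cases ha : a ∈ K <;> by_cases hb : b ∈ K
    · rw [dif_pos ha, dif_pos hb] at heq
      exact hab.ne (congrArg Subtype.val heq)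
    · rw [dif_pos ha, dif_neg hb] at heq
      have hv : a = (hmax b hb).choose := congrArg Subtype.val heq
      exact (hmax b hb).choose_spec.2 (hv ▸ hab.symm)
    · rw [dif_neg ha, dif_pos hb] at heq
      have hv : (hmax a ha).choose = b := congrArg Subtype.val heq
      exact (hmax a ha).choose_spec.2 (hv.symm ▸ hab)
    · exact hE a ha b hb hab
  case pos =>
    obtain ⟨u0, hu0, w0, hw0, huw0⟩ := hE
    -- clique number is exactly 5
    have hK5 : K.card = 5 := by
      have b1 := hdeg u0 hu0
      have b2 := hdeg w0 hw0
      have bc := hcommon u0 w0 hu0 hw0 huw0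
      have e1 : (K \ Nk u0).card = K.card - (Nk u0).card :=
        Finset.card_sdiff_of_subset (hNksub u0)
      have e2 : (K \ Nk w0).card = K.card - (Nk w0).card :=
        Finset.card_sdiff_of_subset (hNksub w0)
      have e3 := Finset.card_union_add_card_inter (K \ Nk u0) (K \ Nk w0)
      have e4 : ((K \ Nk u0) ∪ (K \ Nk w0)).card ≤ K.card :=
        Finset.card_le_card (Finset.union_subset (Finset.sdiff_subset) (Finset.sdiff_subset))
      have h5 : 5 ≤ K.card := hcard ▸ hω
      omega
    -- structure of outside edges
    have hstruct : ∀ u w, u ∉ K → w ∉ K → G.Adj u w →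
        (Nk u).card = 2 ∧ Disjoint (Nk u) (Nk w) := by
      intro u w hu hw huw
      have b1 := hdeg u hu
      have b2 := hdeg w hw
      have bc := hcommon u w hu hw huw
      have e1 : (K \ Nk u).card = K.card - (Nk u).card := Finset.card_sdiff_of_subset (hNksub u)
      have e2 : (K \ Nk w).card = K.card - (Nk w).card := Finset.card_sdiff_of_subset (hNksub w)
      have e3 := Finset.card_union_add_card_inter (K \ Nk u) (K \ Nk w)
      have e4 : ((K \ Nk u) ∪ (K \ Nk w)).card ≤ K.card :=
        Finset.card_le_card (Finset.union_subset (Finset.sdiff_subset) (Finset.sdiff_subset))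
      have hNklt1 : (Nk u).card ≤ K.card := Finset.card_le_card (hNksub u)
      have hNklt2 : (Nk w).card ≤ K.card := Finset.card_le_card (hNksub w)
      have hun : (K \ Nk u) ∪ (K \ Nk w) = K \ (Nk u ∩ Nk w) := by
        ext k; simp only [Finset.mem_union, Finset.mem_sdiff, Finset.mem_inter]; tauto
      have e5 : (K \ (Nk u ∩ Nk w)).card = K.card - (Nk u ∩ Nk w).card :=
        Finset.card_sdiff_of_subset (fun k hk => hNksub u (Finset.mem_inter.1 hk).1)
      have e6 : (Nk u ∩ Nk w).card ≤ (Nk u).card := Finset.card_le_card Finset.inter_subset_left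
      constructor
      · omega
      · rw [Finset.disjoint_iff_inter_eq_empty, ← Finset.card_eq_zero]
        rw [hun, e5] at e3
        omega
    -- the equivalence between K and Fin 5
    have hcardK : Fintype.card ↥K = 5 := by rw [Fintype.card_coe, hK5]
    let σ : ↥K ≃ Fin 5 := Fintype.equivFinOfCardEq hcardK
    -- neighborhood as a finset of Fin 5
    set pfin : V → Finset (Fin 5) :=
      fun v => Finset.univ.filter (fun i => G.Adj v (σ.symm i : V)) with hpfin
    have hpmem : ∀ v i, i ∈ pfin v ↔ G.Adj v (σ.symm i : V) := by
      intro v i; simp [hpfin]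
    have hpcard : ∀ v, (pfin v).card = (Nk v).card := by
      intro v
      apply Finset.card_bij (fun i _ => (σ.symm i : V))
      · intro i hi
        exact (hNkmem v _).2 ⟨(σ.symm i).2, (hpmem v i).1 hi⟩
      · intro i _ j _ hij
        exact σ.symm.injective (Subtype.val_injective hij)
      · intro k hk
        obtain ⟨hkK, hkadj⟩ := (hNkmem v k).1 hk
        exact ⟨σ ⟨k, hkK⟩, (hpmem v _).2 (by simpa using hkadj), by simp⟩
    have hpdisj : ∀ u w, Disjoint (Nk u) (Nk w) → Disjoint (pfin u) (pfin w) := by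
      intro u w hd
      rw [Finset.disjoint_left] at hd ⊢
      intro i hiu hiw
      exact hd ((hNkmem u _).2 ⟨(σ.symm i).2, (hpmem u i).1 hiu⟩)
        ((hNkmem w _).2 ⟨(σ.symm i).2, (hpmem w i).1 hiw⟩)
    -- the coloring
    refine ⟨fun v => if h : v ∈ K then ⟨v, h⟩
      else if hA : ∃ w, w ∉ K ∧ G.Adj v w then σ.symm (petF (pfin v))
      else ⟨(hmax v h).choose, (hmax v h).choose_spec.1⟩, ?_⟩
    intro a b hab heq
    dsimp only at heq
    by_cases ha : a ∈ K <;> by_cases hb : b ∈ K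
    · rw [dif_pos ha, dif_pos hb] at heq
      exact hab.ne (congrArg Subtype.val heq)
    · rw [dif_pos ha, dif_neg hb] at heq
      by_cases hA : ∃ w, w ∉ K ∧ G.Adj b w
      · rw [dif_pos hA] at heq
        obtain ⟨w, hwK, hbw⟩ := hA
        have hc2 : (pfin b).card = 2 := by
          rw [hpcard]; exact (hstruct b w hb hwK hbw).1
        have hmem : petF (pfin b) ∈ pfin b := by
          rw [hpmem, ← heq]
          exact hab.symm
        exact petF_not_mem _ hc2 hmem
      · rw [dif_neg hA] at heq
        have hv : a = (hmax b hb).choose := congrArg Subtype.val heq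
        exact (hmax b hb).choose_spec.2 (hv ▸ hab.symm)
    · rw [dif_neg ha, dif_pos hb] at heq
      by_cases hA : ∃ w, w ∉ K ∧ G.Adj a w
      · rw [dif_pos hA] at heq
        obtain ⟨w, hwK, haw⟩ := hA
        have hc2 : (pfin a).card = 2 := by
          rw [hpcard]; exact (hstruct a w ha hwK haw).1
        have hmem : petF (pfin a) ∈ pfin a := by
          rw [hpmem, heq]
          exact hab
        exact petF_not_mem _ hc2 hmem
      · rw [dif_neg hA] at heq
        have hv : (hmax a ha).choose = b := congrArg Subtype.val heq
        exact (hmax a ha).choose_spec.2 (hv.symm ▸ hab)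
    · rw [dif_neg ha, dif_neg hb] at heq
      have hAa : ∃ w, w ∉ K ∧ G.Adj a w := ⟨b, hb, hab⟩
      have hAb : ∃ w, w ∉ K ∧ G.Adj b w := ⟨a, ha, hab.symm⟩
      rw [dif_pos hAa, dif_pos hAb] at heq
      have hsa := hstruct a b ha hb hab
      have hsb := hstruct b a hb ha hab.symm
      have hca : (pfin a).card = 2 := by rw [hpcard]; exact hsa.1
      have hcb : (pfin b).card = 2 := by rw [hpcard]; exact hsb.1
      have hd : Disjoint (pfin a) (pfin b) := hpdisj a b hsa.2
      exact petF_ne _ _ hca hcb hd (σ.symm.injective heq)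
end

section
/- The Mycielskian μ(K_n) of the complete graph K_n (n ≥ 3) is {2K_2, K_1+C_4}-free and satisfies χ(μ(K_n)) = n + 1. -/
open SimpleGraph

/-- The 4-wheel `K_1 + C_4`. -/
def K1C4 : SimpleGraph (Fin 5) :=
  graphOfList 5 [(0,1),(1,2),(2,3),(3,0),(0,4),(1,4),(2,4),(3,4)]

/-- The Mycielskian of a graph `G`: vertices `V ∪ V' ∪ {u}`, with the edges of `G`,
an edge `x y'` for every edge `x y` of `G`, and `u` joined to every vertex of `V'`. -/
def mycielskian {V : Type*} (G : SimpleGraph V) : SimpleGraph (V ⊕ V ⊕ Unit) :=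
  SimpleGraph.fromRel (fun a b =>
    match a, b with
    | .inl x, .inl y => G.Adj x y
    | .inl x, .inr (.inl y) => G.Adj x y
    | .inr (.inl _), .inr (.inr _) => True
    | _, _ => False)

section Aux

variable {n : ℕ}

lemma adj_ll {x y : Fin n} : (mycielskian ⊤).Adj (.inl x) (.inl y) ↔ x ≠ y := by
  simp [mycielskian]; try tauto
lemma adj_lc {x y : Fin n} : (mycielskian ⊤).Adj (.inl x) (.inr (.inl y)) ↔ x ≠ y := by
  simp [mycielskian]; try tauto
lemma adj_cl {x y : Fin n} : (mycielskian ⊤).Adj (.inr (.inl x)) (.inl y) ↔ x ≠ y := by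
  simp [mycielskian]; try tauto
lemma adj_cu {x : Fin n} {t} : (mycielskian ⊤).Adj (.inr (.inl x)) (.inr (.inr t)) ↔ True := by
  simp [mycielskian]; try tauto
lemma adj_uc {x : Fin n} {t} : (mycielskian ⊤).Adj (.inr (.inr t)) (.inr (.inl x)) ↔ True := by
  simp [mycielskian]; try tauto
lemma nadj_lu {x : Fin n} {t} : (mycielskian ⊤).Adj (.inl x) (.inr (.inr t)) ↔ False := by
  simp [mycielskian]; try tauto
lemma nadj_ul {x : Fin n} {t} : (mycielskian ⊤).Adj (.inr (.inr t)) (.inl x) ↔ False := by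
  simp [mycielskian]; try tauto
lemma nadj_cc {x y : Fin n} : (mycielskian ⊤).Adj (.inr (.inl x)) (.inr (.inl y)) ↔ False := by
  simp [mycielskian]; try tauto
lemma nadj_uu {t t' : Unit} :
    (mycielskian (⊤ : SimpleGraph (Fin n))).Adj (.inr (.inr t)) (.inr (.inr t')) ↔ False := by
  simp [mycielskian]; try tauto

set_option maxHeartbeats 1000000 in
lemma free2K2 : IsFreeOf (mycielskian (completeGraph (Fin n))) (pK2 2) := by
  constructor
  intro f
  have h1 : (mycielskian (completeGraph (Fin n))).Adj (f (0,0)) (f (0,1)) :=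
    f.map_rel_iff.mpr ⟨rfl, by decide⟩
  have h2 : (mycielskian (completeGraph (Fin n))).Adj (f (1,0)) (f (1,1)) :=
    f.map_rel_iff.mpr ⟨rfl, by decide⟩
  have h3 : ¬ (mycielskian (completeGraph (Fin n))).Adj (f (0,0)) (f (1,0)) :=
    fun h => by have := f.map_rel_iff.mp h; exact absurd this.1 (by decide)
  have h4 : ¬ (mycielskian (completeGraph (Fin n))).Adj (f (0,0)) (f (1,1)) :=
    fun h => by have := f.map_rel_iff.mp h; exact absurd this.1 (by decide)
  have h5 : ¬ (mycielskian (completeGraph (Fin n))).Adj (f (0,1)) (f (1,0)) :=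
    fun h => by have := f.map_rel_iff.mp h; exact absurd this.1 (by decide)
  have h6 : ¬ (mycielskian (completeGraph (Fin n))).Adj (f (0,1)) (f (1,1)) :=
    fun h => by have := f.map_rel_iff.mp h; exact absurd this.1 (by decide)
  generalize f (0,0) = a at h1 h3 h4
  generalize f (0,1) = b at h1 h5 h6
  generalize f (1,0) = c at h2 h3 h5
  generalize f (1,1) = d at h2 h4 h6
  rcases a with x | x | t <;> rcases b with y | y | t' <;> rcases c with z | z | t'' <;>
    rcases d with w | w | t''' <;>
    simp_all only [completeGraph_eq_top, adj_ll, adj_lc, adj_cl, adj_cu, adj_uc, nadj_lu,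
      nadj_ul, nadj_cc, nadj_uu, ne_eq, not_not, not_true, not_false_iff, iff_true, iff_false]

set_option maxHeartbeats 1600000 in
lemma freeK1C4 : IsFreeOf (mycielskian (completeGraph (Fin n))) K1C4 := by
  constructor
  intro f
  have key : ∀ i j : Fin 5, K1C4.Adj i j →
      (mycielskian (completeGraph (Fin n))).Adj (f i) (f j) :=
    fun i j h => f.map_rel_iff.mpr h
  have key' : ∀ i j : Fin 5, ¬ K1C4.Adj i j →
      ¬ (mycielskian (completeGraph (Fin n))).Adj (f i) (f j) :=
    fun i j h h' => h (f.map_rel_iff.mp h')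
  have hK : ∀ i j : Fin 5, (i ≠ j ∧
      (((i:ℕ),(j:ℕ)) ∈ [(0,1),(1,2),(2,3),(3,0),(0,4),(1,4),(2,4),(3,4)] ∨
       ((j:ℕ),(i:ℕ)) ∈ [(0,1),(1,2),(2,3),(3,0),(0,4),(1,4),(2,4),(3,4)])) ↔ K1C4.Adj i j := by
    intro i j; rw [K1C4, graphOfList, fromRel_adj]
  have h01 := key 0 1 ((hK 0 1).mp (by decide))
  have h12 := key 1 2 ((hK 1 2).mp (by decide))
  have h23 := key 2 3 ((hK 2 3).mp (by decide))
  have h30 := key 3 0 ((hK 3 0).mp (by decide))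
  have h04 := key 0 4 ((hK 0 4).mp (by decide))
  have h14 := key 1 4 ((hK 1 4).mp (by decide))
  have h24 := key 2 4 ((hK 2 4).mp (by decide))
  have h34 := key 3 4 ((hK 3 4).mp (by decide))
  have h02 := key' 0 2 (fun h => by have := (hK 0 2).mpr h; revert this; decide)
  have h13 := key' 1 3 (fun h => by have := (hK 1 3).mpr h; revert this; decide)
  have h02' : f 0 ≠ f 2 := fun h => absurd (f.injective h) (by decide)
  have h13' : f 1 ≠ f 3 := fun h => absurd (f.injective h) (by decide)
  generalize f 0 = a at h01 h30 h04 h02 h02'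
  generalize f 1 = b at h01 h12 h14 h13 h13'
  generalize f 2 = c at h12 h23 h24 h02 h02'
  generalize f 3 = d at h23 h30 h34 h13 h13'
  generalize f 4 = e at h04 h14 h24 h34
  rcases a with x | x | t <;> rcases b with y | y | t' <;> rcases c with z | z | t'' <;>
    rcases d with w | w | t''' <;> rcases e with v | v | t'''' <;>
    simp_all only [completeGraph_eq_top, adj_ll, adj_lc, adj_cl, adj_cu, adj_uc, nadj_lu,
      nadj_ul, nadj_cc, nadj_uu, ne_eq, not_not, not_true, not_false_iff, iff_true, iff_false,
      Sum.inl.injEq, Sum.inr.injEq]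

lemma colorable_succ : (mycielskian (completeGraph (Fin n))).Colorable (n+1) := by
  refine ⟨Coloring.mk (fun a => match a with
    | .inl x => x.castSucc
    | .inr (.inl x) => x.castSucc
    | .inr (.inr _) => Fin.last n) ?_⟩
  rintro (x | x | t) (y | y | t') hadj <;>
    rw [completeGraph_eq_top] at hadj <;>
    simp only [adj_ll, adj_lc, adj_cl, adj_cu, adj_uc, nadj_lu, nadj_ul, nadj_cc, nadj_uu,
      iff_true, iff_false] at hadj <;>
    simp_all [Fin.castSucc_inj, (Fin.castSucc_lt_last _).ne, (Fin.castSucc_lt_last _).ne']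

lemma not_colorable_n : ¬ (mycielskian (completeGraph (Fin n))).Colorable n := by
  rintro ⟨C⟩
  set k := C (.inr (.inr ())) with hk
  set c' : Fin n → Fin n := fun x => if C (.inl x) = k then C (.inr (.inl x)) else C (.inl x)
    with hc'
  have copyu : ∀ x : Fin n, C (.inr (.inl x)) ≠ k := by
    intro x
    exact C.valid (by rw [completeGraph_eq_top]; exact adj_cu.mpr trivial)
  have hne : ∀ x, c' x ≠ k := by
    intro x
    by_cases h : C (.inl x) = k
    · rw [hc']; simp only [if_pos h]; exact copyu x
    · rw [hc']; simp only [if_neg h]; exact h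
  have hinj : Function.Injective c' := by
    intro x y hxy
    by_contra hxyne
    have hll : C (.inl x) ≠ C (.inl y) :=
      C.valid (by rw [completeGraph_eq_top]; exact adj_ll.mpr hxyne)
    have hlc : C (.inl y) ≠ C (.inr (.inl x)) :=
      (C.valid (by rw [completeGraph_eq_top]; exact adj_lc.mpr (Ne.symm hxyne)))
    have hcl : C (.inl x) ≠ C (.inr (.inl y)) :=
      (C.valid (by rw [completeGraph_eq_top]; exact adj_lc.mpr hxyne))
    simp only [hc'] at hxy
    by_cases h1 : C (.inl x) = k <;> by_cases h2 : C (.inl y) = k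
    · exact hll (h1.trans h2.symm)
    · rw [if_pos h1, if_neg h2] at hxy
      exact hlc hxy.symm
    · rw [if_neg h1, if_pos h2] at hxy
      exact hcl hxy
    · rw [if_neg h1, if_neg h2] at hxy
      exact hll hxy
  obtain ⟨x, hx⟩ := Finite.surjective_of_injective hinj k
  exact hne x hx

lemma chrom_eq : (mycielskian (completeGraph (Fin n))).chromaticNumber = ((n + 1 : ℕ) : ℕ∞) := by
  refine le_antisymm (colorable_succ.chromaticNumber_le) ?_
  have h1 : ¬ ((mycielskian (completeGraph (Fin n))).chromaticNumber ≤ (n : ℕ∞)) :=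
    fun h => not_colorable_n (chromaticNumber_le_iff_colorable.mp h)
  have h2 := not_le.mp h1
  rw [Nat.cast_add, Nat.cast_one]
  exact Order.add_one_le_of_lt h2

end Aux

theorem mycielskian_completeGraph_free_and_chromatic (n : ℕ) (hn : 3 ≤ n) :
    IsFreeOf (mycielskian (completeGraph (Fin n))) (pK2 2) ∧
    IsFreeOf (mycielskian (completeGraph (Fin n))) K1C4 ∧
    (mycielskian (completeGraph (Fin n))).chromaticNumber = ((n + 1 : ℕ) : ℕ∞) := by
  exact ⟨free2K2, freeK1C4, chrom_eq⟩
end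

section
/- Let G be a gem-free graph with maximum clique A = {v_1,…,v_ω}, and let C_{i,j} (for i < j) be the set of vertices outside A nonadjacent to both v_i and v_j and not lying in any earlier C_{i',j'} in lexicographic order. Then for j ≥ 3, the induced subgraph on C_{i,j} is P_4-free, and hence perfect. -/
open SimpleGraph

/-- The path on 4 vertices. -/
def P4 : SimpleGraph (Fin 4) :=
  graphOfList 4 [(0,1),(1,2),(2,3)]

/-- A graph is perfect if every induced subgraph has chromatic number equal
to its clique number. -/
def IsPerfect {V : Type*} (G : SimpleGraph V) : Prop :=
  ∀ S : Set V, (G.induce S).chromaticNumber = ((G.induce S).cliqueNum : ℕ∞)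

/-! ### Auxiliary lemmas -/

section Aux
open Finset

universe u

lemma freeOf_induce {V W : Type*} {G : SimpleGraph V} {H : SimpleGraph W}
    (hfree : IsFreeOf G H) (s : Set V) : IsFreeOf (G.induce s) H :=
  ⟨fun e => hfree.false ((SimpleGraph.Embedding.induce s).comp e)⟩

lemma embed_of_four {V : Type*} {H : SimpleGraph V} {a b c d : V}
    (hfree : IsFreeOf H P4)
    (hab : H.Adj a b) (hbc : H.Adj b c) (hcd : H.Adj c d)
    (hac : ¬ H.Adj a c) (had : ¬ H.Adj a d) (hbd : ¬ H.Adj b d) : False := by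
  classical
  have hab' : a ≠ b := hab.ne
  have hbc' : b ≠ c := hbc.ne
  have hcd' : c ≠ d := hcd.ne
  have hac' : a ≠ c := fun h => had (by rw [h]; exact hcd)
  have had' : a ≠ d := fun h => hbd (by rw [← h]; exact hab.symm)
  have hbd' : b ≠ d := fun h => had (by rw [h] at hab; exact hab)
  have hca : ¬ H.Adj c a := fun h => hac h.symm
  have hda : ¬ H.Adj d a := fun h => had h.symm
  have hdb : ¬ H.Adj d b := fun h => hbd h.symm
  refine hfree.false ⟨⟨![a,b,c,d], ?_⟩, ?_⟩
  · intro m n hmn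
    fin_cases m <;> fin_cases n <;> simp_all
  · intro m n
    change H.Adj (![a,b,c,d] m) (![a,b,c,d] n) ↔ P4.Adj m n
    fin_cases m <;> fin_cases n <;>
      simp_all [P4, graphOfList, SimpleGraph.fromRel_adj, hab.symm, hbc.symm, hcd.symm,
        SimpleGraph.irrefl] <;> decide

lemma gem_embed {V : Type*} {H : SimpleGraph V} {a b c d w : V}
    (hfree : IsFreeOf H gemGraph)
    (hab : H.Adj a b) (hbc : H.Adj b c) (hcd : H.Adj c d)
    (hac : ¬ H.Adj a c) (had : ¬ H.Adj a d) (hbd : ¬ H.Adj b d)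
    (hwa : H.Adj w a) (hwb : H.Adj w b) (hwc : H.Adj w c) (hwd : H.Adj w d) : False := by
  classical
  have hab' : a ≠ b := hab.ne
  have hbc' : b ≠ c := hbc.ne
  have hcd' : c ≠ d := hcd.ne
  have hac' : a ≠ c := fun h => had (by rw [h]; exact hcd)
  have had' : a ≠ d := fun h => hbd (by rw [← h]; exact hab.symm)
  have hbd' : b ≠ d := fun h => had (by rw [h] at hab; exact hab)
  have hwa' : w ≠ a := hwa.ne
  have hwb' : w ≠ b := hwb.ne
  have hwc' : w ≠ c := hwc.ne
  have hwd' : w ≠ d := hwd.ne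
  have hca : ¬ H.Adj c a := fun h => hac h.symm
  have hda : ¬ H.Adj d a := fun h => had h.symm
  have hdb : ¬ H.Adj d b := fun h => hbd h.symm
  refine hfree.false ⟨⟨![a,b,c,d,w], ?_⟩, ?_⟩
  · intro m n hmn
    fin_cases m <;> fin_cases n <;> simp_all
  · intro m n
    change H.Adj (![a,b,c,d,w] m) (![a,b,c,d,w] n) ↔ gemGraph.Adj m n
    fin_cases m <;> fin_cases n <;>
      simp_all [gemGraph, graphOfList, SimpleGraph.fromRel_adj, hab.symm, hbc.symm, hcd.symm,
        hwa.symm, hwb.symm, hwc.symm, hwd.symm, SimpleGraph.irrefl] <;> decide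

/-- In a `P4`-free graph, a maximal clique and a maximal independent set intersect. -/
lemma meet {V : Type*} [Fintype V] {H : SimpleGraph V} (hfree : IsFreeOf H P4)
    {K I : Finset V} (hK : H.IsClique K)
    (hKmax : ∀ w ∉ K, ∃ u ∈ K, ¬ H.Adj w u)
    (hInd : ∀ a ∈ I, ∀ b ∈ I, ¬ H.Adj a b)
    (hImax : ∀ w ∉ I, ∃ u ∈ I, H.Adj w u)
    (hKne : K.Nonempty) :
    ∃ x, x ∈ K ∧ x ∈ I := by
  classical
  by_contra hcon
  push_neg at hcon
  obtain ⟨k0, hk0⟩ := hKne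
  obtain ⟨i0, hi0I, -⟩ := hImax k0 (hcon k0 hk0)
  obtain ⟨ii, hiI, hmax⟩ := I.exists_max_image
    (fun a => #(K.filter (fun x => H.Adj a x))) ⟨i0, hi0I⟩
  have hiK : ii ∉ K := fun h => hcon ii h hiI
  obtain ⟨k', hk'K, hik'⟩ := hKmax ii hiK
  have hk'I : k' ∉ I := fun h => hcon k' hk'K h
  obtain ⟨i', hi'I, hk'i'⟩ := hImax k' hk'I
  have hsub : ¬ (K.filter (fun x => H.Adj ii x) ⊆ K.filter (fun x => H.Adj i' x)) := by
    intro hs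
    have h1 : K.filter (fun x => H.Adj ii x) ⊆ (K.filter (fun x => H.Adj i' x)).erase k' := by
      intro y hy
      exact Finset.mem_erase.2 ⟨fun h => hik' (h ▸ (Finset.mem_filter.1 hy).2), hs hy⟩
    have h2 : #(K.filter (fun x => H.Adj ii x)) ≤ #(K.filter (fun x => H.Adj i' x)) - 1 := by
      calc #(K.filter (fun x => H.Adj ii x)) ≤ #((K.filter (fun x => H.Adj i' x)).erase k') :=
            Finset.card_le_card h1
        _ = #(K.filter (fun x => H.Adj i' x)) - 1 := by
            rw [Finset.card_erase_of_mem (Finset.mem_filter.2 ⟨hk'K, hk'i'.symm⟩)]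
    have h3 := hmax i' hi'I
    have h4 : 0 < #(K.filter (fun x => H.Adj i' x)) :=
      Finset.card_pos.2 ⟨k', Finset.mem_filter.2 ⟨hk'K, hk'i'.symm⟩⟩
    omega
  obtain ⟨k, hkA, hkB⟩ := Finset.not_subset.1 hsub
  obtain ⟨hkK, hik⟩ := Finset.mem_filter.1 hkA
  have hi'k : ¬ H.Adj i' k := fun h => hkB (Finset.mem_filter.2 ⟨hkK, h⟩)
  have hkk' : k ≠ k' := fun h => hik' (h ▸ hik)
  have hkk'adj : H.Adj k k' := hK hkK hk'K hkk'
  have hii' : ii ≠ i' := fun h => hik' ((h ▸ hk'i').symm)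
  have hii'adj : ¬ H.Adj i' ii := hInd i' hi'I ii hiI
  exact embed_of_four hfree hk'i'.symm hkk'adj.symm hik.symm
    hi'k hii'adj (fun h => hik' h.symm)

lemma exists_maximal_clique_containing {V : Type*} [Fintype V] (H : SimpleGraph V)
    {s : Finset V} (hs : H.IsClique s) :
    ∃ K : Finset V, H.IsClique K ∧ s ⊆ K ∧ ∀ w ∉ K, ∃ u ∈ K, ¬ H.Adj w u := by
  classical
  obtain ⟨K, hKmem, hKmax⟩ :=
    (Finset.univ.powerset.filter (fun t : Finset V => H.IsClique (↑t : Set V) ∧ s ⊆ t)).exists_max_image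
      Finset.card ⟨s, by simp [hs]⟩
  rw [Finset.mem_filter] at hKmem
  obtain ⟨-, hKc, hsK⟩ := hKmem
  refine ⟨K, hKc, hsK, ?_⟩
  intro w hw
  by_contra hc
  push_neg at hc
  have hclq : H.IsClique ↑(insert w K) := by
    rw [Finset.coe_insert]
    exact hKc.insert (fun b hb _ => hc b hb)
  have hle := hKmax (insert w K) (Finset.mem_filter.2
    ⟨Finset.mem_powerset.2 (Finset.subset_univ _), hclq,
      hsK.trans (Finset.subset_insert _ _)⟩)
  have := Finset.card_insert_of_notMem hw
  omega

/-- Removing a maximal independent set drops the clique number. -/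
lemma step_cliqueNum {V : Type*} [Fintype V] [Nonempty V] {H : SimpleGraph V}
    (hfree : IsFreeOf H P4)
    {I : Finset V} (hInd : ∀ a ∈ I, ∀ b ∈ I, ¬ H.Adj a b)
    (hImax : ∀ w ∉ I, ∃ u ∈ I, H.Adj w u) :
    ∀ [inst : Fintype ↥((↑I : Set V)ᶜ)],
      (H.induce (↑I : Set V)ᶜ).cliqueNum + 1 ≤ H.cliqueNum := by
  intro inst
  classical
  have hone : 1 ≤ H.cliqueNum := by
    have v0 : V := Classical.arbitrary V
    have h1 : H.IsClique (↑({v0} : Finset V)) := by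
      simp [SimpleGraph.isClique_iff]
    calc 1 = #({v0} : Finset V) := by simp
      _ ≤ H.cliqueNum := SimpleGraph.IsClique.card_le_cliqueNum (tc := h1)
  obtain ⟨s, hs⟩ := SimpleGraph.exists_isNClique_cliqueNum (G := H.induce (↑I : Set V)ᶜ)
  rcases Nat.eq_zero_or_pos (H.induce (↑I : Set V)ᶜ).cliqueNum with h0 | hpos
  · omega
  set s' : Finset V := s.image Subtype.val with hs'def
  have hcard' : #s' = (H.induce (↑I : Set V)ᶜ).cliqueNum := by
    rw [hs'def, Finset.card_image_of_injective _ Subtype.val_injective, hs.card_eq]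
  have hs'mem : ∀ x ∈ s', x ∉ I := by
    intro x hx
    rw [hs'def, Finset.mem_image] at hx
    obtain ⟨⟨y, hy⟩, -, rfl⟩ := hx
    simpa using hy
  have hs'c : H.IsClique ↑s' := by
    intro x hx y hy hxy
    rw [hs'def, Finset.coe_image] at hx hy
    obtain ⟨x', hx', rfl⟩ := hx
    obtain ⟨y', hy', rfl⟩ := hy
    exact hs.isClique hx' hy' (fun h => hxy (congrArg _ h))
  obtain ⟨K, hKc, hsK, hKmax⟩ := exists_maximal_clique_containing H hs'c
  have hs'ne : s'.Nonempty := by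
    rw [← Finset.card_pos, hcard']
    exact hpos
  obtain ⟨x, hxK, hxI⟩ := meet hfree hKc hKmax hInd hImax (hs'ne.mono hsK)
  have hxs' : x ∉ s' := fun h => hs'mem x h hxI
  have hins : insert x s' ⊆ K := Finset.insert_subset hxK hsK
  have h5 : #s' + 1 ≤ #K := by
    calc #s' + 1 = #(insert x s') := (Finset.card_insert_of_notMem hxs').symm
      _ ≤ #K := Finset.card_le_card hins
  have hKle : #K ≤ H.cliqueNum := SimpleGraph.IsClique.card_le_cliqueNum (tc := hKc)
  omega

lemma colorable_step {V : Type*} {H : SimpleGraph V} {I : Finset V} {m : ℕ}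
    (hc : (H.induce (↑I : Set V)ᶜ).Colorable m)
    (hInd : ∀ a ∈ I, ∀ b ∈ I, ¬ H.Adj a b) : H.Colorable (m + 1) := by
  classical
  obtain ⟨c⟩ := hc
  refine ⟨SimpleGraph.Coloring.mk
    (fun x => if h : x ∈ I then Fin.last m else (c ⟨x, by simpa using h⟩).castSucc) ?_⟩
  intro x y hxy
  by_cases hx : x ∈ I <;> by_cases hy : y ∈ I <;> simp only [hx, hy, dif_pos, dif_neg,
    not_false_iff]
  · exact absurd hxy (hInd x hx y hy)
  · exact (Fin.castSucc_lt_last _).ne'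
  · exact (Fin.castSucc_lt_last _).ne
  · intro h
    exact c.valid (v := ⟨x, by simpa using hx⟩) (w := ⟨y, by simpa using hy⟩) hxy
      (Fin.castSucc_injective _ h)

lemma cograph_colorable : ∀ (n : ℕ) {V : Type u} [Fintype V] (H : SimpleGraph V),
    IsFreeOf H P4 → Fintype.card V ≤ n → H.Colorable H.cliqueNum := by
  intro n
  induction n with
  | zero =>
    intro V _ H _ hcard
    haveI : IsEmpty V := by
      rw [← Fintype.card_eq_zero_iff]
      omega
    exact SimpleGraph.Colorable.of_isEmpty (G := H) _
  | succ n ih =>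
    intro V _ H hfree hcard
    classical
    cases isEmpty_or_nonempty V with
    | inl h => exact SimpleGraph.Colorable.of_isEmpty (G := H) _
    | inr h =>
      obtain ⟨I, hImaxcl⟩ := SimpleGraph.maximumClique_exists (G := Hᶜ)
      have hInd : ∀ a ∈ I, ∀ b ∈ I, ¬ H.Adj a b := by
        intro a ha b hb hadj
        by_cases hab : a = b
        · exact H.irrefl (hab ▸ hadj)
        · exact (hImaxcl.isClique ha hb hab).2 hadj
      have hImax : ∀ w ∉ I, ∃ u ∈ I, H.Adj w u := by
        intro w hw
        by_contra hc
        push_neg at hc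
        have hclq : Hᶜ.IsClique ↑(insert w I) := by
          rw [Finset.coe_insert]
          exact hImaxcl.isClique.insert (fun b hb hne => ⟨hne, hc b hb⟩)
        have hle := hImaxcl.maximum (insert w I) hclq
        have := Finset.card_insert_of_notMem hw
        omega
      have hIne : I.Nonempty := by
        by_contra hne
        rw [Finset.not_nonempty_iff_eq_empty] at hne
        obtain ⟨x, hx, -⟩ := hImax (Classical.arbitrary V) (hne ▸ Finset.notMem_empty _)
        rw [hne] at hx
        exact absurd hx (Finset.notMem_empty x)
      obtain ⟨i0, hi0⟩ := hIne
      letI : Fintype ↥((↑I : Set V)ᶜ) := Fintype.ofFinite _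
      have hfree' : IsFreeOf (H.induce (↑I : Set V)ᶜ) P4 := freeOf_induce hfree _
      have hcard' : Fintype.card ↥((↑I : Set V)ᶜ) ≤ n := by
        have hlt : Fintype.card ↥((↑I : Set V)ᶜ) < Fintype.card V := by
          refine Fintype.card_lt_of_injective_of_notMem (b := i0) Subtype.val
            Subtype.val_injective ?_
          rintro ⟨⟨y, hy⟩, rfl⟩
          exact hy (Finset.mem_coe.2 hi0)
        omega
      have hcol := ih (H.induce (↑I : Set V)ᶜ) hfree' hcard'
      have hstep := step_cliqueNum hfree hInd hImax
      have hcol2 := colorable_step (hcol.mono (by omega :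
        (H.induce (↑I : Set V)ᶜ).cliqueNum ≤ H.cliqueNum - 1)) hInd
      have hone : 1 ≤ H.cliqueNum := by omega
      simpa [Nat.sub_add_cancel hone] using hcol2

lemma P4free_chromatic {V : Type u} [Fintype V] (H : SimpleGraph V)
    (hfree : IsFreeOf H P4) : H.chromaticNumber = (H.cliqueNum : ℕ∞) := by
  classical
  have hcol := cograph_colorable (Fintype.card V) H hfree le_rfl
  refine le_antisymm hcol.chromaticNumber_le ?_
  have hne : H.chromaticNumber ≠ ⊤ :=
    (lt_of_le_of_lt hcol.chromaticNumber_le (WithTop.coe_lt_top _)).ne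
  obtain ⟨s, hs⟩ := SimpleGraph.exists_isNClique_cliqueNum (G := H)
  have hcol2 := H.colorable_chromaticNumber_of_fintype
  have hle : #s ≤ (H.chromaticNumber).toNat := hs.isClique.card_le_of_colorable hcol2
  rw [← ENat.coe_toNat hne]
  exact_mod_cast hs.card_eq ▸ hle

lemma P4free_perfect {V : Type u} [Fintype V] (H : SimpleGraph V)
    (hfree : IsFreeOf H P4) : IsPerfect H := by
  intro S
  letI : Fintype ↥S := Fintype.ofFinite _
  exact P4free_chromatic _ (freeOf_induce hfree S)

end Aux

/-- For a gem-free graph `G` with maximum clique `{v 0, …, v (ω-1)}` and the sets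
`C i j` defined in lexicographic order, for `i < j` with `j` at least the third
index, the induced subgraph on `C i j` is `P₄`-free, and hence perfect. -/
theorem Cij_P4_free_of_gem_free {V : Type*} [Fintype V] (G : SimpleGraph V)
    (hgem : IsFreeOf G gemGraph)
    (v : Fin G.cliqueNum → V) (hinj : Function.Injective v)
    (hclique : G.IsClique (Set.range v))
    (C : Fin G.cliqueNum → Fin G.cliqueNum → Set V)
    (hC : ∀ i j : Fin G.cliqueNum, i < j →
      C i j =
        {x | x ∉ Set.range v ∧ x ∉ G.neighborSet (v i) ∧ x ∉ G.neighborSet (v j)} \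
          ⋃ (q : {q : Fin G.cliqueNum × Fin G.cliqueNum //
              q.1 < q.2 ∧ (q.1 < i ∨ (q.1 = i ∧ q.2 < j))}), C q.1.1 q.1.2)
    (i j : Fin G.cliqueNum) (hij : i < j) (hj : 2 ≤ (j : ℕ)) :
    IsFreeOf (G.induce (C i j)) P4 ∧ IsPerfect (G.induce (C i j)) := by
  classical
  -- every vertex of `C i j` is adjacent to all `v k` with `k < j`, `k ≠ i`
  have key : ∀ x ∈ C i j, ∀ k : Fin G.cliqueNum, k < j → k ≠ i → G.Adj (v k) x := by
    intro x hx k hkj hki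
    by_contra hadj
    rw [hC i j hij] at hx
    obtain ⟨⟨hxA, hxi, hxj⟩, hxU⟩ := hx
    -- helper: from a nonadjacent pair (a,b) with a < b, x lies in some C a' b'
    -- with (a',b') lex-≤ (a,b)
    have helper : ∀ a b : Fin G.cliqueNum, a < b →
        x ∉ G.neighborSet (v a) → x ∉ G.neighborSet (v b) →
        ∃ a' b' : Fin G.cliqueNum, a' < b' ∧ (a' < a ∨ (a' = a ∧ b' ≤ b)) ∧ x ∈ C a' b' := by
      intro a b hab hna hnb
      by_cases hmem : x ∈ C a b
      · exact ⟨a, b, hab, Or.inr ⟨rfl, le_refl b⟩, hmem⟩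
      · rw [hC a b hab] at hmem
        have hx' : x ∈ ⋃ (q : {q : Fin G.cliqueNum × Fin G.cliqueNum //
            q.1 < q.2 ∧ (q.1 < a ∨ (q.1 = a ∧ q.2 < b))}), C q.1.1 q.1.2 := by
          by_contra hcontra
          exact hmem ⟨⟨hxA, hna, hnb⟩, hcontra⟩
        rw [Set.mem_iUnion] at hx'
        obtain ⟨⟨⟨a', b'⟩, hlt, hlex⟩, hmem'⟩ := hx'
        exact ⟨a', b', hlt, by
          rcases hlex with h | ⟨h1, h2⟩
          · exact Or.inl h
          · exact Or.inr ⟨h1, le_of_lt h2⟩, hmem'⟩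
    have hnk : x ∉ G.neighborSet (v k) := hadj
    rcases lt_or_gt_of_ne hki with hk | hk
    · -- k < i : use pair (k, i)
      obtain ⟨a', b', hlt, hlex, hmem⟩ := helper k i hk hnk hxi
      apply hxU
      rw [Set.mem_iUnion]
      refine ⟨⟨⟨a', b'⟩, hlt, Or.inl ?_⟩, hmem⟩
      rcases hlex with h | ⟨h1, -⟩
      · exact lt_trans h hk
      · exact h1 ▸ hk
    · -- i < k : use pair (i, k)
      obtain ⟨a', b', hlt, hlex, hmem⟩ := helper i k hk hxi hnk
      apply hxU
      rw [Set.mem_iUnion]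
      refine ⟨⟨⟨a', b'⟩, hlt, ?_⟩, hmem⟩
      rcases hlex with h | ⟨h1, h2⟩
      · exact Or.inl h
      · exact Or.inr ⟨h1, lt_of_le_of_lt h2 hkj⟩
  have hCA : ∀ x ∈ C i j, x ∉ Set.range v := by
    intro x hx
    rw [hC i j hij] at hx
    exact hx.1.1
  -- P4-freeness
  have hP4 : IsFreeOf (G.induce (C i j)) P4 := by
    constructor
    intro e
    -- choose k < j with k ≠ i
    have hj1 : 1 < G.cliqueNum := lt_of_le_of_lt (by omega) j.isLt
    have hj0 : 0 < G.cliqueNum := by omega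
    obtain ⟨k, hkj, hki⟩ : ∃ k : Fin G.cliqueNum, k < j ∧ k ≠ i := by
      by_cases h : (i : ℕ) = 0
      · refine ⟨⟨1, hj1⟩, ?_, ?_⟩
        · rw [Fin.lt_def]
          show (1 : ℕ) < (j : ℕ)
          omega
        · intro hc
          have hc' : (1 : ℕ) = (i : ℕ) := congrArg Fin.val hc
          omega
      · refine ⟨⟨0, hj0⟩, ?_, ?_⟩
        · rw [Fin.lt_def]
          show (0 : ℕ) < (j : ℕ)
          omega
        · intro hc
          have hc' : (0 : ℕ) = (i : ℕ) := congrArg Fin.val hc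
          omega
    have hAdj : ∀ m n : Fin 4, G.Adj ↑(e m) ↑(e n) ↔ P4.Adj m n :=
      fun m n => e.map_rel_iff
    have hmem : ∀ m : Fin 4, ↑(e m) ∈ C i j := fun m => (e m).2
    have hvk : ∀ m : Fin 4, G.Adj (v k) ↑(e m) := fun m => key _ (hmem m) k hkj hki
    exact gem_embed hgem
      ((hAdj 0 1).2 (by simp [P4, graphOfList, SimpleGraph.fromRel_adj] <;> decide))
      ((hAdj 1 2).2 (by simp [P4, graphOfList, SimpleGraph.fromRel_adj] <;> decide))
      ((hAdj 2 3).2 (by simp [P4, graphOfList, SimpleGraph.fromRel_adj] <;> decide))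
      (fun h => absurd ((hAdj 0 2).1 h) (by simp [P4, graphOfList, SimpleGraph.fromRel_adj] <;> decide))
      (fun h => absurd ((hAdj 0 3).1 h) (by simp [P4, graphOfList, SimpleGraph.fromRel_adj] <;> decide))
      (fun h => absurd ((hAdj 1 3).1 h) (by simp [P4, graphOfList, SimpleGraph.fromRel_adj] <;> decide))
      (hvk 0) (hvk 1) (hvk 2) (hvk 3)
  refine ⟨hP4, ?_⟩
  letI : Fintype ↥(C i j) := Fintype.ofFinite _
  exact P4free_perfect _ hP4
end
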